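/- arXiv:1602.05768 — 2 statements merged into one kernel-verified Lean document; each statement's English description precedes it below -/
import Mathlib

section
/- There exists an absolute constant C₀ > 0 such that the following holds. Let G be a connected r-regular graph on n vertices with 1 − λ ≥ C₀·√((log n)/n), and consider the BIPS process on G with source v and parameter k = 2 started from any A_0 with |A_0| ≥ (9/10)·n. Then for every t ≥ 0, Pr(|A_t| < (9/10)·n) ≤ t·n^{−8}. -/
open Finset

noncomputable section

variable {V : Type*}

/-- The random-walk transition matrix `P = A(G)/r` of a graph `G`. -/
def transMatrix [Fintype V] (G : SimpleGraph V) [DecidableRel G.Adj] (r : ℕ) :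
    Matrix V V ℝ :=
  Matrix.of fun x y => if G.Adj x y then (r : ℝ)⁻¹ else 0

/-- `λ = max_{i ≥ 2} |λ_i|`: the largest absolute value of an eigenvalue of the
transition matrix on the space orthogonal to the constant vectors.  For a connected
regular graph this is exactly the second largest eigenvalue in absolute value. -/
def secondEigen [Fintype V] (G : SimpleGraph V) [DecidableRel G.Adj] (r : ℕ) : ℝ :=
  sSup {y : ℝ | ∃ (μ : ℝ) (f : V → ℝ), y = |μ| ∧ f ≠ 0 ∧ (∑ x, f x) = 0 ∧
    (transMatrix G r).mulVec f = μ • f}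

/-- `d_A(x) = |N(x) ∩ A|`. -/
def degIn [Fintype V] [DecidableEq V] (G : SimpleGraph V) [DecidableRel G.Adj]
    (A : Finset V) (x : V) : ℕ :=
  (G.neighborFinset x ∩ A).card

/-- Probability that a vertex `u` choosing `k` uniform random neighbours (with
replacement) in an `r`-regular graph hits the set `A` at least once. -/
def pInf [Fintype V] [DecidableEq V] (G : SimpleGraph V) [DecidableRel G.Adj]
    (r k : ℕ) (A : Finset V) (u : V) : ℝ :=
  1 - (1 - (degIn G A u : ℝ) / (r : ℝ)) ^ k

/-- One-step transition probability of the BIPS process with source `v` and parameter `k`: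
each `u ≠ v` is independently infected with probability `pInf`, and `v` is always infected. -/
def bipsStep [Fintype V] [DecidableEq V] (G : SimpleGraph V) [DecidableRel G.Adj]
    (r k : ℕ) (v : V) (A B : Finset V) : ℝ :=
  if v ∈ B then
    ∏ u ∈ Finset.univ.erase v, (if u ∈ B then pInf G r k A u else 1 - pInf G r k A u)
  else 0

/-- Marginal distribution at time `t` of the Markov chain with one-step transition
probabilities `step` started at `A₀`. -/
def chainProb [Fintype V] [DecidableEq V] (step : Finset V → Finset V → ℝ)
    (A₀ : Finset V) : ℕ → Finset V → ℝ
  | 0, B => if B = A₀ then 1 else 0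
  | (t+1), B => ∑ A : Finset V, chainProb step A₀ t A * step A B

/-- Probability of the trajectory `ω 0, ω 1, …, ω T` for the Markov chain with one-step
transition probabilities `step` started at `A₀`. -/
def trajProb [DecidableEq V] (step : Finset V → Finset V → ℝ) (A₀ : Finset V) (T : ℕ)
    (ω : Fin (T+1) → Finset V) : ℝ :=
  (if ω 0 = A₀ then (1:ℝ) else 0) * ∏ i : Fin T, step (ω i.castSucc) (ω i.succ)

open scoped Classical in
/-- Probability that the trajectory `(A_0, …, A_T)` of the chain satisfies `Q`. -/
def trajPr [Fintype V] [DecidableEq V] (step : Finset V → Finset V → ℝ)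
    (A₀ : Finset V) (T : ℕ) (Q : (Fin (T+1) → Finset V) → Prop) : ℝ :=
  ∑ ω : Fin (T+1) → Finset V, if Q ω then trajProb step A₀ T ω else 0

open scoped Classical in
/-- One-step transition probability of the COBRA process with branching factor `k`:
every vertex of `C` chooses `k` neighbours independently and uniformly at random with
replacement, and `B` is the set of all chosen vertices. -/
def cobraStep [Fintype V] [DecidableEq V] (G : SimpleGraph V) [DecidableRel G.Adj]
    (k : ℕ) (C B : Finset V) : ℝ :=
  ∑ f : ↥C → Fin k → V,
    if (∀ x : ↥C, ∀ i : Fin k, G.Adj (x : V) (f x i)) ∧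
        B = Finset.image (fun p : ↥C × Fin k => f p.1 p.2) Finset.univ then
      ∏ x : ↥C, ((G.degree (x : V) : ℝ)⁻¹) ^ k
    else 0

/-- `Pr(cov(u) > T)`: probability that after `T` rounds of the COBRA process started at
`C_0 = {u}` the sets `C_1, …, C_T` have not yet covered all vertices. -/
def prCovGT [Fintype V] [DecidableEq V] (G : SimpleGraph V) [DecidableRel G.Adj]
    (k : ℕ) (u : V) (T : ℕ) : ℝ :=
  trajPr (cobraStep G k) {u} T (fun ω => ∃ x : V, ∀ s : Fin (T+1), s ≠ 0 → x ∉ ω s)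

/-- `Pr(infec(v) > T)`: probability that after `T` rounds of the BIPS process with
source `v` (started from `A_0 = {v}`) the infected set is not yet the whole vertex set. -/
def prInfecGT [Fintype V] [DecidableEq V] (G : SimpleGraph V) [DecidableRel G.Adj]
    (r k : ℕ) (v : V) (T : ℕ) : ℝ :=
  trajPr (bipsStep G r k v) {v} T (fun ω => ∀ s : Fin (T+1), ω s ≠ Finset.univ)

/-- Probability that a vertex `u` hits `A` when it chooses one uniform random neighbour,
and then with probability `ρ` a second (independent, uniform) neighbour. -/
def pInfRho [Fintype V] [DecidableEq V] (G : SimpleGraph V) [DecidableRel G.Adj]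
    (r : ℕ) (ρ : ℝ) (A : Finset V) (u : V) : ℝ :=
  1 - (1 - (degIn G A u : ℝ) / (r : ℝ)) * (1 - ρ * (degIn G A u : ℝ) / (r : ℝ))

/-- One-step transition probability of the BIPS process with expected branching factor
`1 + ρ` and source `v`. -/
def bipsRhoStep [Fintype V] [DecidableEq V] (G : SimpleGraph V) [DecidableRel G.Adj]
    (r : ℕ) (ρ : ℝ) (v : V) (A B : Finset V) : ℝ :=
  if v ∈ B then
    ∏ u ∈ Finset.univ.erase v,
      (if u ∈ B then pInfRho G r ρ A u else 1 - pInfRho G r ρ A u)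
  else 0

open scoped Classical in
/-- One-step transition probability of the COBRA process with expected branching factor
`1 + ρ`: each vertex of `C` chooses one uniform random neighbour and, independently with
probability `ρ`, a second uniform random neighbour; `B` is the set of all chosen vertices. -/
def cobraRhoStep [Fintype V] [DecidableEq V] (G : SimpleGraph V) [DecidableRel G.Adj]
    (ρ : ℝ) (C B : Finset V) : ℝ :=
  ∑ f : ↥C → V, ∑ g : ↥C → Option V,
    if (∀ x : ↥C, G.Adj (x : V) (f x)) ∧
        (∀ x : ↥C, ∀ y : V, g x = some y → G.Adj (x : V) y) ∧
        B = Finset.image f Finset.univ ∪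
          Finset.univ.biUnion (fun x : ↥C => (g x).toFinset) then
      ∏ x : ↥C, ((G.degree (x : V) : ℝ)⁻¹ *
        Option.elim (g x) (1 - ρ) (fun _ => ρ * (G.degree (x : V) : ℝ)⁻¹))
    else 0

/-- `Pr(cov(u) > T)` for the COBRA process with expected branching factor `1 + ρ`. -/
def prCovRhoGT [Fintype V] [DecidableEq V] (G : SimpleGraph V) [DecidableRel G.Adj]
    (ρ : ℝ) (u : V) (T : ℕ) : ℝ :=
  trajPr (cobraRhoStep G ρ) {u} T (fun ω => ∃ x : V, ∀ s : Fin (T+1), s ≠ 0 → x ∉ ω s)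

end


namespace BipsAux
open Finset Real

variable {V : Type*} [Fintype V] [DecidableEq V] (G : SimpleGraph V) [DecidableRel G.Adj]

lemma degIn_frac_mem (r : ℕ) (hreg : G.IsRegularOfDegree r) (A : Finset V) (u : V) :
    0 ≤ (degIn G A u : ℝ) / r ∧ (degIn G A u : ℝ) / r ≤ 1 := by
  rcases Nat.eq_zero_or_pos r with hr | hr
  · subst hr; simp
  constructor
  · positivity
  · rw [div_le_one (by exact_mod_cast hr)]
    have : degIn G A u ≤ r := by
      rw [← hreg u, ← SimpleGraph.card_neighborFinset_eq_degree]
      exact card_le_card (inter_subset_left)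
    exact_mod_cast this

lemma pInf_mem (r : ℕ) (hreg : G.IsRegularOfDegree r) (A : Finset V) (u : V) :
    0 ≤ pInf G r 2 A u ∧ pInf G r 2 A u ≤ 1 := by
  obtain ⟨h0, h1⟩ := degIn_frac_mem G r hreg A u
  unfold pInf
  constructor <;> nlinarith [sq_nonneg (1 - (degIn G A u : ℝ) / r)]

/-- master reindexing lemma -/
lemma sum_step_mul (r k : ℕ) (v : V) (A : Finset V) (φ : ℕ → ℝ) :
    ∑ B : Finset V, bipsStep G r k v A B * φ B.card
    = ∑ S ∈ (univ.erase v).powerset,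
        ((∏ u ∈ S, pInf G r k A u) * ∏ u ∈ (univ.erase v) \ S, (1 - pInf G r k A u))
          * φ (S.card + 1) := by
  classical
  have h1 : ∑ B : Finset V, bipsStep G r k v A B * φ B.card
      = ∑ B ∈ univ.filter (fun B : Finset V => v ∈ B),
          (∏ u ∈ univ.erase v, (if u ∈ B then pInf G r k A u else 1 - pInf G r k A u))
            * φ B.card := by
    rw [Finset.sum_filter]
    refine Finset.sum_congr rfl fun B _ => ?_
    unfold bipsStep
    by_cases hv : v ∈ B <;> simp [hv]
  rw [h1]
  refine Finset.sum_nbij' (fun B => B.erase v) (fun S => insert v S) ?_ ?_ ?_ ?_ ?_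
  · intro B hB
    simp only [mem_powerset]
    exact erase_subset_erase v (subset_univ B)
  · intro S hS
    simp only [mem_filter, mem_univ, true_and]
    exact mem_insert_self v S
  · intro B hB
    simp only [mem_filter] at hB
    exact insert_erase hB.2
  · intro S hS
    simp only [mem_powerset] at hS
    exact Finset.erase_insert (fun hvS => (mem_erase.1 (hS hvS)).1 rfl)
  · intro B hB
    simp only [mem_filter, mem_univ, true_and] at hB
    have hsub : B.erase v ⊆ univ.erase v := erase_subset_erase v (subset_univ B)
    have hcard : B.card = (B.erase v).card + 1 := by
      rw [Finset.card_erase_of_mem hB]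
      have : 1 ≤ B.card := Finset.card_pos.2 ⟨v, hB⟩
      omega
    have hprod : (∏ u ∈ univ.erase v, (if u ∈ B then pInf G r k A u else 1 - pInf G r k A u))
        = (∏ u ∈ B.erase v, pInf G r k A u) *
            ∏ u ∈ (univ.erase v) \ B.erase v, (1 - pInf G r k A u) := by
      conv_lhs => rw [← Finset.union_sdiff_of_subset hsub]
      rw [Finset.prod_union (disjoint_sdiff)]
      congr 1
      · refine Finset.prod_congr rfl fun u hu => ?_
        rw [if_pos (mem_of_mem_erase hu)]
      · refine Finset.prod_congr rfl fun u hu => ?_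
        rw [if_neg]
        rcases Finset.mem_sdiff.1 hu with ⟨hu1, hu2⟩
        intro huB
        exact hu2 (Finset.mem_erase.2 ⟨(Finset.mem_erase.1 hu1).1, huB⟩)
    rw [hprod, hcard]

lemma step_sum_one (r : ℕ) (hreg : G.IsRegularOfDegree r) (v : V) (A : Finset V) :
    ∑ B : Finset V, bipsStep G r 2 v A B = 1 := by
  have := sum_step_mul G r 2 v A (fun _ => 1)
  simp only [mul_one] at this
  rw [this, ← Finset.prod_add]
  simp

lemma step_nonneg (r : ℕ) (hreg : G.IsRegularOfDegree r) (v : V) (A B : Finset V) :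
    0 ≤ bipsStep G r 2 v A B := by
  unfold bipsStep
  split
  · apply Finset.prod_nonneg
    intro u _
    obtain ⟨h0, h1⟩ := pInf_mem G r hreg A u
    split <;> linarith
  · exact le_refl 0

lemma chernoff (p : V → ℝ) (hp : ∀ u, 0 ≤ p u ∧ p u ≤ 1) (E : Finset V) (a s : ℝ)
    (hn : 0 < (Fintype.card V : ℝ)) (hs0 : 0 ≤ s)
    (hh1 : s / (2 * (Fintype.card V : ℝ)) ≤ 1)
    (hμ : a + s ≤ ∑ u ∈ E, p u) :
    ∑ S ∈ E.powerset, ((∏ u ∈ S, p u) * ∏ u ∈ E \ S, (1 - p u))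
        * (if (S.card : ℝ) < a then 1 else 0)
      ≤ Real.exp (-(s^2) / (4 * (Fintype.card V : ℝ))) := by
  classical
  set n : ℝ := (Fintype.card V : ℝ) with hn'
  set h : ℝ := s / (2 * n) with hh
  have hh0 : 0 ≤ h := by positivity
  have hW : ∀ S ∈ E.powerset, 0 ≤ (∏ u ∈ S, p u) * ∏ u ∈ E \ S, (1 - p u) := by
    intro S _
    apply mul_nonneg
    · exact Finset.prod_nonneg fun u _ => (hp u).1
    · exact Finset.prod_nonneg fun u _ => by linarith [(hp u).2]
  set μ : ℝ := ∑ u ∈ E, p u with hμ'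
  have hμ0 : 0 ≤ μ := Finset.sum_nonneg fun u _ => (hp u).1
  have hμn : μ ≤ n := by
    calc μ ≤ ∑ u ∈ E, 1 := Finset.sum_le_sum fun u _ => (hp u).2
    _ = E.card := by simp
    _ ≤ n := by
        rw [hn']
        exact_mod_cast (Finset.card_le_card (Finset.subset_univ E)).trans (le_of_eq Finset.card_univ)
  -- step A: indicator ≤ exponential
  have stepA : ∑ S ∈ E.powerset, ((∏ u ∈ S, p u) * ∏ u ∈ E \ S, (1 - p u))
        * (if (S.card : ℝ) < a then 1 else 0)
      ≤ ∑ S ∈ E.powerset, ((∏ u ∈ S, p u) * ∏ u ∈ E \ S, (1 - p u))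
        * Real.exp (h * (a - S.card)) := by
    refine Finset.sum_le_sum fun S hS => ?_
    refine mul_le_mul_of_nonneg_left ?_ (hW S hS)
    split
    · rename_i hlt
      rw [show (1:ℝ) = Real.exp 0 by simp]
      apply Real.exp_le_exp.2
      have : (0:ℝ) ≤ a - S.card := by linarith
      positivity
    · positivity
  -- step B: product form
  have stepB : ∑ S ∈ E.powerset, ((∏ u ∈ S, p u) * ∏ u ∈ E \ S, (1 - p u))
        * Real.exp (h * (a - S.card))
      = Real.exp (h * a) * ∏ u ∈ E, (p u * Real.exp (-h) + (1 - p u)) := by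
    rw [Finset.prod_add]
    rw [Finset.mul_sum]
    refine Finset.sum_congr rfl fun S hS => ?_
    have : ∏ u ∈ S, p u * Real.exp (-h) = (∏ u ∈ S, p u) * Real.exp (-h) ^ S.card := by
      rw [Finset.prod_mul_distrib, Finset.prod_const]
    have e1 : Real.exp (h * (a - S.card)) = Real.exp (h * a) * Real.exp (-h) ^ S.card := by
      rw [← Real.exp_nat_mul, ← Real.exp_add]
      ring_nf
    rw [this, e1]
    ring
  have stepC : ∏ u ∈ E, (p u * Real.exp (-h) + (1 - p u))
      ≤ Real.exp (-(1 - Real.exp (-h)) * μ) := by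
    have : ∀ u ∈ E, p u * Real.exp (-h) + (1 - p u) ≤ Real.exp (-((1 - Real.exp (-h)) * p u)) := by
      intro u _
      have := Real.add_one_le_exp (-((1 - Real.exp (-h)) * p u))
      nlinarith []
    calc ∏ u ∈ E, (p u * Real.exp (-h) + (1 - p u))
        ≤ ∏ u ∈ E, Real.exp (-((1 - Real.exp (-h)) * p u)) := by
          refine Finset.prod_le_prod (fun u _ => ?_) this
          have h1 := (hp u).1; have h2 := (hp u).2
          have := Real.exp_pos (-h)
          nlinarith
      _ = Real.exp (∑ u ∈ E, -((1 - Real.exp (-h)) * p u)) := (Real.exp_sum E _).symm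
      _ = Real.exp (-(1 - Real.exp (-h)) * μ) := by
          rw [hμ']
          congr 1
          rw [Finset.mul_sum]
          refine Finset.sum_congr rfl fun u _ => by ring
  have hexp : Real.exp (-h) ≤ 1 - h + h^2 := by
    have habs : |(-h : ℝ)| ≤ 1 := by rw [abs_neg, abs_of_nonneg hh0]; exact hh1
    have := (abs_le.1 (Real.abs_exp_sub_one_sub_id_le habs)).2
    nlinarith [this]
  have key : h * a + (-(1 - Real.exp (-h)) * μ) ≤ -(s^2) / (4*n) := by
    have h1 : (h - h^2) * μ ≤ (1 - Real.exp (-h)) * μ :=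
      mul_le_mul_of_nonneg_right (by linarith) hμ0
    have h2 : h * (a - μ) ≤ h * (-s) := mul_le_mul_of_nonneg_left (by linarith) hh0
    have h25 : h^2 * μ ≤ h^2 * n := mul_le_mul_of_nonneg_left hμn (sq_nonneg h)
    have h3 : -(h*s) + h^2*n = -(s^2)/(4*n) := by
      rw [hh]; field_simp; ring
    nlinarith [h1, h2, h25, h3]
  calc ∑ S ∈ E.powerset, ((∏ u ∈ S, p u) * ∏ u ∈ E \ S, (1 - p u))
        * (if (S.card : ℝ) < a then 1 else 0)
      ≤ Real.exp (h * a) * ∏ u ∈ E, (p u * Real.exp (-h) + (1 - p u)) := by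
        rw [← stepB]; exact stepA
    _ ≤ Real.exp (h * a) * Real.exp (-(1 - Real.exp (-h)) * μ) :=
        mul_le_mul_of_nonneg_left stepC (Real.exp_pos _).le
    _ = Real.exp (h * a + (-(1 - Real.exp (-h)) * μ)) := (Real.exp_add _ _).symm
    _ ≤ Real.exp (-(s^2) / (4*n)) := Real.exp_le_exp.2 key

lemma chainProb_nonneg (r : ℕ) (hreg : G.IsRegularOfDegree r) (v : V) (A₀ : Finset V) :
    ∀ t B, 0 ≤ chainProb (bipsStep G r 2 v) A₀ t B := by
  intro t
  induction t with
  | zero => intro B; simp only [chainProb]; split <;> norm_num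
  | succ t ih =>
    intro B
    simp only [chainProb]
    exact Finset.sum_nonneg fun A _ => mul_nonneg (ih A) (step_nonneg G r hreg v A B)

lemma chainProb_sum (r : ℕ) (hreg : G.IsRegularOfDegree r) (v : V) (A₀ : Finset V) :
    ∀ t, ∑ B : Finset V, chainProb (bipsStep G r 2 v) A₀ t B = 1 := by
  intro t
  induction t with
  | zero =>
    simp only [chainProb]
    rw [Finset.sum_ite_eq' Finset.univ A₀ (fun _ => (1:ℝ))]
    simp
  | succ t ih =>
    simp only [chainProb]
    rw [Finset.sum_comm]
    calc ∑ A : Finset V, ∑ B : Finset V, chainProb (bipsStep G r 2 v) A₀ t A * bipsStep G r 2 v A B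
        = ∑ A : Finset V, chainProb (bipsStep G r 2 v) A₀ t A := by
          refine Finset.sum_congr rfl fun A _ => ?_
          rw [← Finset.mul_sum, step_sum_one G r hreg v A, mul_one]
      _ = 1 := ih

lemma bad_sum_le (r : ℕ) (hreg : G.IsRegularOfDegree r) (v : V) (A₀ : Finset V)
    (c q : ℝ) (hq : 0 ≤ q) (hA₀ : ¬ ((A₀.card : ℝ) < c))
    (hstep : ∀ A : Finset V, ¬ ((A.card : ℝ) < c) →
      ∑ B ∈ Finset.univ.filter (fun B : Finset V => (B.card : ℝ) < c),
        bipsStep G r 2 v A B ≤ q) :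
    ∀ t, ∑ B ∈ Finset.univ.filter (fun B : Finset V => (B.card : ℝ) < c),
        chainProb (bipsStep G r 2 v) A₀ t B ≤ t * q := by
  intro t
  induction t with
  | zero =>
    simp only [chainProb]
    rw [Finset.sum_ite_eq' _ A₀ (fun _ => (1:ℝ))]
    rw [if_neg (by simp [hA₀])]
    simp
  | succ t ih =>
    simp only [chainProb]
    rw [Finset.sum_comm]
    have hsplit := Finset.sum_filter_add_sum_filter_not Finset.univ
      (fun A : Finset V => (A.card : ℝ) < c)
      (fun A : Finset V => ∑ B ∈ Finset.univ.filter (fun B : Finset V => (B.card : ℝ) < c),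
        chainProb (bipsStep G r 2 v) A₀ t A * bipsStep G r 2 v A B)
    rw [← hsplit]
    have hbad : ∑ A ∈ Finset.univ.filter (fun A : Finset V => (A.card : ℝ) < c),
        ∑ B ∈ Finset.univ.filter (fun B : Finset V => (B.card : ℝ) < c),
          chainProb (bipsStep G r 2 v) A₀ t A * bipsStep G r 2 v A B ≤ t * q := by
      calc _ ≤ ∑ A ∈ Finset.univ.filter (fun A : Finset V => (A.card : ℝ) < c),
          chainProb (bipsStep G r 2 v) A₀ t A := by
            refine Finset.sum_le_sum fun A _ => ?_
            rw [← Finset.mul_sum]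
            have h1 : ∑ B ∈ Finset.univ.filter (fun B : Finset V => (B.card : ℝ) < c),
                bipsStep G r 2 v A B ≤ 1 := by
              rw [← step_sum_one G r hreg v A]
              exact Finset.sum_le_sum_of_subset_of_nonneg (Finset.filter_subset _ _)
                (fun B _ _ => step_nonneg G r hreg v A B)
            have h0 := chainProb_nonneg G r hreg v A₀ t A
            nlinarith
        _ ≤ t * q := ih
    have hgood : ∑ A ∈ Finset.univ.filter (fun A : Finset V => ¬ ((A.card : ℝ) < c)),
        ∑ B ∈ Finset.univ.filter (fun B : Finset V => (B.card : ℝ) < c),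
          chainProb (bipsStep G r 2 v) A₀ t A * bipsStep G r 2 v A B ≤ q := by
      calc _ ≤ ∑ A ∈ Finset.univ.filter (fun A : Finset V => ¬ ((A.card : ℝ) < c)),
          chainProb (bipsStep G r 2 v) A₀ t A * q := by
            refine Finset.sum_le_sum fun A hA => ?_
            rw [← Finset.mul_sum]
            exact mul_le_mul_of_nonneg_left (hstep A (Finset.mem_filter.1 hA).2)
              (chainProb_nonneg G r hreg v A₀ t A)
        _ = (∑ A ∈ Finset.univ.filter (fun A : Finset V => ¬ ((A.card : ℝ) < c)),
            chainProb (bipsStep G r 2 v) A₀ t A) * q := by rw [Finset.sum_mul]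
        _ ≤ 1 * q := by
            refine mul_le_mul_of_nonneg_right ?_ hq
            rw [← chainProb_sum G r hreg v A₀ t]
            exact Finset.sum_le_sum_of_subset_of_nonneg (Finset.filter_subset _ _)
              (fun B _ _ => chainProb_nonneg G r hreg v A₀ t B)
        _ = q := one_mul q
    push_cast
    linarith

section Spectral

/-- summation functional on Euclidean space -/
noncomputable def sumL (V : Type*) [Fintype V] : EuclideanSpace ℝ V →ₗ[ℝ] ℝ where
  toFun f := ∑ x, f x
  map_add' f g := by simp [Finset.sum_add_distrib]
  map_smul' c f := by simp [Finset.mul_sum]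

variable (r : ℕ)

/-- transition matrix as a linear endomorphism of Euclidean space -/
noncomputable def TL : EuclideanSpace ℝ V →ₗ[ℝ] EuclideanSpace ℝ V where
  toFun f := WithLp.toLp 2 ((transMatrix G r).mulVec f)
  map_add' f g := by ext; simp [Matrix.mulVec_add]
  map_smul' c f := by ext; simp [Matrix.mulVec_smul]

lemma transMatrix_nonneg (x y : V) : 0 ≤ transMatrix G r x y := by
  unfold transMatrix
  simp only [Matrix.of_apply]
  split <;> positivity

lemma transMatrix_symm (x y : V) : transMatrix G r x y = transMatrix G r y x := by
  unfold transMatrix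
  simp only [Matrix.of_apply, G.adj_comm]

lemma rowsum_eq (hr : 0 < r) (hreg : G.IsRegularOfDegree r) (x : V) :
    ∑ y, transMatrix G r x y = 1 := by
  unfold transMatrix
  simp only [Matrix.of_apply]
  rw [← Finset.sum_filter, ← SimpleGraph.neighborFinset_eq_filter, Finset.sum_const,
    SimpleGraph.card_neighborFinset_eq_degree, hreg x, nsmul_eq_mul]
  field_simp

lemma rowsum_le_one (hreg : G.IsRegularOfDegree r) (x : V) :
    ∑ y, transMatrix G r x y ≤ 1 := by
  rcases Nat.eq_zero_or_pos r with hr | hr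
  · subst hr
    unfold transMatrix
    simp
  · exact (rowsum_eq G r hr hreg x).le

lemma TL_isSymmetric : (TL (V := V) G r).IsSymmetric := by
  intro f g
  simp only [TL, LinearMap.coe_mk, AddHom.coe_mk, PiLp.inner_apply, RCLike.inner_apply,
    conj_trivial]
  unfold Matrix.mulVec dotProduct
  show ∑ x, g x * ∑ y, transMatrix G r x y * f y = ∑ x, (∑ y, transMatrix G r x y * g y) * f x
  conv_lhs => arg 2; ext x; rw [mul_comm]
  conv_rhs => arg 2; ext x; rw [mul_comm]
  calc ∑ x, (∑ y, transMatrix G r x y * f y) * g x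
      = ∑ x, ∑ y, transMatrix G r x y * f y * g x := by
        refine Finset.sum_congr rfl fun x _ => ?_; rw [Finset.sum_mul]
    _ = ∑ y, ∑ x, transMatrix G r x y * f y * g x := Finset.sum_comm
    _ = ∑ y, f y * ∑ x, transMatrix G r y x * g x := by
        refine Finset.sum_congr rfl fun y _ => ?_
        rw [Finset.mul_sum]
        refine Finset.sum_congr rfl fun x _ => ?_
        rw [transMatrix_symm G r]
        ring

lemma W_invariant (hr : 0 < r) (hreg : G.IsRegularOfDegree r) :
    ∀ f ∈ LinearMap.ker (sumL V), TL G r f ∈ LinearMap.ker (sumL V) := by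
  intro f hf
  simp only [LinearMap.mem_ker, sumL, LinearMap.coe_mk, AddHom.coe_mk] at hf ⊢
  show ∑ x, (transMatrix G r).mulVec f x = 0
  unfold Matrix.mulVec dotProduct
  calc ∑ x, ∑ y, transMatrix G r x y * f y
      = ∑ y, (∑ x, transMatrix G r x y) * f y := by
        rw [Finset.sum_comm]
        refine Finset.sum_congr rfl fun y _ => ?_
        rw [Finset.sum_mul]
    _ = ∑ y, f y := by
        refine Finset.sum_congr rfl fun y _ => ?_
        rw [show ∑ x, transMatrix G r x y = 1 from ?_, one_mul]
        rw [show ∑ x, transMatrix G r x y = ∑ x, transMatrix G r y x from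
          Finset.sum_congr rfl fun x _ => transMatrix_symm G r x y]
        exact rowsum_eq G r hr hreg y
    _ = 0 := hf


/-- the set whose sup defines secondEigen -/
def eigenSet (r : ℕ) : Set ℝ :=
  {y : ℝ | ∃ (μ : ℝ) (f : V → ℝ), y = |μ| ∧ f ≠ 0 ∧ (∑ x, f x) = 0 ∧
    (transMatrix G r).mulVec f = μ • f}

lemma secondEigen_eq : secondEigen G r = sSup (eigenSet G r) := rfl

lemma eigenSet_le_one (hreg : G.IsRegularOfDegree r) : ∀ y ∈ eigenSet G r, y ≤ 1 := by
  rintro y ⟨μ, f, rfl, hf0, _, heq⟩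
  have hex : ∃ z, f z ≠ 0 := by
    by_contra h
    push_neg at h
    exact hf0 (funext fun z => h z)
  obtain ⟨z, hz⟩ := hex
  have hne : (Finset.univ : Finset V).Nonempty := ⟨z, Finset.mem_univ z⟩
  obtain ⟨x₀, _, hx₀⟩ := Finset.exists_max_image Finset.univ (fun y => |f y|) hne
  have hfx₀ : 0 < |f x₀| := lt_of_lt_of_le (abs_pos.2 hz) (hx₀ z (Finset.mem_univ z))
  have hmv : |μ| * |f x₀| ≤ |f x₀| := by
    have h1 : (transMatrix G r).mulVec f x₀ = μ * f x₀ := by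
      rw [heq]; rfl
    have h2 : |μ * f x₀| ≤ ∑ y, transMatrix G r x₀ y * |f y| := by
      rw [← h1]
      unfold Matrix.mulVec dotProduct
      refine (Finset.abs_sum_le_sum_abs _ _).trans ?_
      refine Finset.sum_le_sum fun y _ => ?_
      rw [abs_mul, abs_of_nonneg (transMatrix_nonneg G r x₀ y)]
    have h3 : ∑ y, transMatrix G r x₀ y * |f y| ≤ ∑ y, transMatrix G r x₀ y * |f x₀| := by
      refine Finset.sum_le_sum fun y _ => ?_
      exact mul_le_mul_of_nonneg_left (hx₀ y (Finset.mem_univ y)) (transMatrix_nonneg G r x₀ y)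
    have h4 : ∑ y, transMatrix G r x₀ y * |f x₀| ≤ |f x₀| := by
      rw [← Finset.sum_mul]
      nlinarith [rowsum_le_one G r hreg x₀,
        Finset.sum_nonneg fun y (_ : y ∈ Finset.univ) => transMatrix_nonneg G r x₀ y]
    calc |μ| * |f x₀| = |μ * f x₀| := (abs_mul μ (f x₀)).symm
      _ ≤ _ := h2.trans (h3.trans h4)
  exact le_of_mul_le_mul_right (by linarith) hfx₀

lemma eigenSet_bddAbove (hreg : G.IsRegularOfDegree r) : BddAbove (eigenSet G r) :=
  ⟨1, fun y hy => eigenSet_le_one G r hreg y hy⟩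

lemma secondEigen_le_one (hreg : G.IsRegularOfDegree r) : secondEigen G r ≤ 1 :=
  Real.sSup_le (eigenSet_le_one G r hreg) zero_le_one

/-- Eigenpairs of the restriction of TL to the kernel of the sum functional
give elements of the eigen set. -/
lemma eigen_mem (hr : 0 < r) (hreg : G.IsRegularOfDegree r) (i : Fin (Module.finrank ℝ ↥(LinearMap.ker (sumL V)))) :
    |((TL_isSymmetric G r).restrict_invariant (W_invariant G r hr hreg)).eigenvalues rfl i| ∈ eigenSet G r := by
  set hS := (TL_isSymmetric G r).restrict_invariant (W_invariant G r hr hreg) with hhS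
  set b := hS.eigenvectorBasis rfl with hb
  refine ⟨hS.eigenvalues rfl i, ((b i : ↥(LinearMap.ker (sumL V))) : EuclideanSpace ℝ V),
    rfl, ?_, ?_, ?_⟩
  · intro h
    exact b.orthonormal.ne_zero i (Subtype.ext (by simpa using congrArg (WithLp.toLp 2) h))
  · exact LinearMap.mem_ker.mp (b i).2
  · have h := hS.apply_eigenvectorBasis rfl i
    have h2 := congrArg (Subtype.val) h
    rw [LinearMap.restrict_coe_apply, Submodule.coe_smul] at h2
    rw [← hb] at h2
    exact congrArg WithLp.ofLp h2

lemma secondEigen_nonneg (hr : 0 < r) (hreg : G.IsRegularOfDegree r)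
    (hcard : 2 ≤ Fintype.card V) : 0 ≤ secondEigen G r := by
  obtain ⟨x, y, hxy⟩ := Fintype.exists_pair_of_one_lt_card hcard
  set f : EuclideanSpace ℝ V := WithLp.toLp 2 (fun z => if z = x then 1 else if z = y then (-1:ℝ) else 0) with hf
  have hfW : f ∈ LinearMap.ker (sumL V) := by
    simp only [LinearMap.mem_ker, sumL, LinearMap.coe_mk, AddHom.coe_mk]
    show (∑ z, f z) = 0
    rw [hf]
    have hsplit : ∀ z, (if z = x then (1:ℝ) else if z = y then -1 else 0)
        = (if z = x then (1:ℝ) else 0) + (if z = y then (-1:ℝ) else 0) := by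
      intro z
      rcases eq_or_ne z x with h1 | h1
      · subst h1
        rw [if_pos rfl, if_pos rfl, if_neg hxy]
        ring
      · rw [if_neg h1, if_neg h1, zero_add]
    rw [Finset.sum_congr rfl (fun z _ => hsplit z), Finset.sum_add_distrib,
      Finset.sum_ite_eq' Finset.univ x (fun _ => (1:ℝ)),
      Finset.sum_ite_eq' Finset.univ y (fun _ => (-1:ℝ))]
    simp
  have hf0 : f ≠ 0 := by
    intro h
    have : f x = 0 := by rw [h]; rfl
    rw [hf] at this
    simp at this
  have : Nontrivial ↥(LinearMap.ker (sumL V)) :=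
    ⟨⟨⟨f, hfW⟩, 0, by simp [Subtype.ext_iff, hf0]⟩⟩
  have hpos : 0 < Module.finrank ℝ ↥(LinearMap.ker (sumL V)) := Module.finrank_pos_iff.2 this
  have := eigen_mem G r hr hreg ⟨0, hpos⟩
  calc (0:ℝ) ≤ |((TL_isSymmetric G r).restrict_invariant (W_invariant G r hr hreg)).eigenvalues rfl ⟨0, hpos⟩| := abs_nonneg _
    _ ≤ secondEigen G r := le_csSup (eigenSet_bddAbove G r hreg) this

end Spectral

lemma esq {ι : Type*} [Fintype ι] (g : EuclideanSpace ℝ ι) : ‖g‖^2 = ∑ i, (g i)^2 := by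
  rw [EuclideanSpace.norm_eq, Real.sq_sqrt (Finset.sum_nonneg fun i _ => sq_nonneg _)]
  refine Finset.sum_congr rfl fun i _ => ?_
  rw [Real.norm_eq_abs, sq_abs]

set_option maxHeartbeats 2000000 in
lemma mulVec_sq_le (hr : 0 < r) (hreg : G.IsRegularOfDegree r)
    (f : EuclideanSpace ℝ V) (hf : (∑ x, f x) = 0) :
    ∑ x, ((transMatrix G r).mulVec f x)^2 ≤ (secondEigen G r)^2 * ∑ x, (f x)^2 := by
  classical
  have hsym := (TL_isSymmetric G r).restrict_invariant (W_invariant G r hr hreg)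
  set b := hsym.eigenvectorBasis rfl with hb
  set μ := hsym.eigenvalues rfl with hμ
  have hμlam : ∀ i, |μ i| ≤ secondEigen G r := fun i =>
    le_csSup (eigenSet_bddAbove G r hreg) (eigen_mem G r hr hreg i)
  have hfW : f ∈ LinearMap.ker (sumL V) := by
    simp only [LinearMap.mem_ker, sumL, LinearMap.coe_mk, AddHom.coe_mk]
    exact hf
  set w : ↥(LinearMap.ker (sumL V)) := ⟨f, hfW⟩ with hw
  have hrepr : ∀ i, b.repr ((TL (V := V) G r).restrict (W_invariant G r hr hreg) w) i
      = μ i * b.repr w i := by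
    intro i
    rw [b.repr_apply_apply, b.repr_apply_apply]
    have h1 : (inner ℝ (b i) ((TL (V := V) G r).restrict (W_invariant G r hr hreg) w) : ℝ)
        = inner ℝ ((TL (V := V) G r).restrict (W_invariant G r hr hreg) (b i)) w :=
      (hsym (b i) w).symm
    rw [h1, hsym.apply_eigenvectorBasis rfl i, real_inner_smul_left]
    simp [hμ, hb]
  have hnorm1 : ‖(TL (V := V) G r).restrict (W_invariant G r hr hreg) w‖^2
      = ∑ i, (b.repr ((TL (V := V) G r).restrict (W_invariant G r hr hreg) w) i)^2 := by
    rw [← b.repr.norm_map ((TL (V := V) G r).restrict (W_invariant G r hr hreg) w), esq]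
  have hnorm2 : ‖w‖^2 = ∑ i, (b.repr w i)^2 := by
    rw [← b.repr.norm_map w, esq]
  have hkey : ‖(TL (V := V) G r).restrict (W_invariant G r hr hreg) w‖^2
      ≤ (secondEigen G r)^2 * ‖w‖^2 := by
    rw [hnorm1, hnorm2, Finset.mul_sum]
    refine Finset.sum_le_sum fun i _ => ?_
    rw [hrepr i, mul_pow]
    have h2 : (μ i)^2 ≤ (secondEigen G r)^2 := by
      have h3 := hμlam i
      nlinarith [abs_nonneg (μ i), sq_abs (μ i)]
    nlinarith [sq_nonneg (b.repr w i)]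
  have hSwcoe : (((TL (V := V) G r).restrict (W_invariant G r hr hreg) w) : EuclideanSpace ℝ V)
      = (transMatrix G r).mulVec f := by
    rw [LinearMap.restrict_coe_apply]
    rfl
  have h5 : ∑ x, ((transMatrix G r).mulVec f x)^2
      = ‖(TL (V := V) G r).restrict (W_invariant G r hr hreg) w‖^2 := by
    rw [← Submodule.norm_coe, esq, hSwcoe]
  have h6 : ∑ x, (f x)^2 = ‖w‖^2 := by
    rw [← Submodule.norm_coe, esq]
  rw [h5, h6]
  exact hkey

lemma sum_degIn (r : ℕ) (hreg : G.IsRegularOfDegree r) (A : Finset V) :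
    ∑ u, (degIn G A u : ℝ) = r * A.card := by
  have h1 : ∀ u, (degIn G A u : ℝ) = ∑ a ∈ A, (if G.Adj u a then (1:ℝ) else 0) := by
    intro u
    unfold degIn
    rw [Finset.inter_comm, ← Finset.filter_mem_eq_inter, Finset.card_filter]
    push_cast
    refine Finset.sum_congr rfl fun a _ => ?_
    simp [SimpleGraph.mem_neighborFinset]
  calc ∑ u, (degIn G A u : ℝ) = ∑ u, ∑ a ∈ A, (if G.Adj u a then (1:ℝ) else 0) :=
        Finset.sum_congr rfl fun u _ => h1 u
    _ = ∑ a ∈ A, ∑ u, (if G.Adj u a then (1:ℝ) else 0) := Finset.sum_comm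
    _ = ∑ a ∈ A, (r : ℝ) := by
        refine Finset.sum_congr rfl fun a _ => ?_
        have : ∀ u, (if G.Adj u a then (1:ℝ) else 0) = (if u ∈ G.neighborFinset a then (1:ℝ) else 0) := by
          intro u
          simp [SimpleGraph.mem_neighborFinset, G.adj_comm]
        rw [Finset.sum_congr rfl fun u _ => this u, Finset.sum_ite_mem, Finset.univ_inter,
          Finset.sum_const, SimpleGraph.card_neighborFinset_eq_degree, hreg a, nsmul_eq_mul, mul_one]
    _ = r * A.card := by rw [Finset.sum_const, nsmul_eq_mul]; ring

lemma mulVec_indicator (r : ℕ) (A : Finset V) (u : V) :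
    (transMatrix G r).mulVec (fun y => if y ∈ A then (1:ℝ) else 0) u
      = (degIn G A u : ℝ) / r := by
  unfold Matrix.mulVec dotProduct transMatrix degIn
  simp only [Matrix.of_apply]
  have h1 : ∀ y, (if G.Adj u y then (r:ℝ)⁻¹ else 0) * (if y ∈ A then (1:ℝ) else 0)
      = if y ∈ G.neighborFinset u ∩ A then (r:ℝ)⁻¹ else 0 := by
    intro y
    by_cases h2 : G.Adj u y <;> by_cases h3 : y ∈ A <;>
      simp [h2, h3, SimpleGraph.mem_neighborFinset]
  rw [Finset.sum_congr rfl fun y _ => h1 y, Finset.sum_ite_mem, Finset.univ_inter,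
    Finset.sum_const, nsmul_eq_mul]
  rw [div_eq_mul_inv]

lemma mean_bound (r : ℕ) (hr : 0 < r) (hreg : G.IsRegularOfDegree r)
    (hlam0 : 0 ≤ secondEigen G r) (hlam1 : secondEigen G r ≤ 1)
    (hn : 0 < Fintype.card V)
    (A : Finset V) (hA : (9/10 : ℝ) * (Fintype.card V : ℝ) ≤ (A.card : ℝ)) :
    (9/10 : ℝ) * (Fintype.card V : ℝ)
      + (9/100 : ℝ) * (Fintype.card V : ℝ) * (1 - (secondEigen G r)^2)
      ≤ ∑ u, pInf G r 2 A u := by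
  classical
  set n : ℝ := (Fintype.card V : ℝ) with hn'
  have hn0 : (0:ℝ) < n := by rw [hn']; exact_mod_cast hn
  set α : ℝ := (A.card : ℝ) / n with hα
  have hα1 : α ≤ 1 := by
    rw [hα, div_le_one hn0, hn']
    exact_mod_cast Finset.card_le_card (Finset.subset_univ A) |>.trans_eq Finset.card_univ
  have hα9 : (9/10 : ℝ) ≤ α := by
    rw [hα, le_div_iff₀ hn0]
    linarith
  set lam := secondEigen G r with hlam
  set x : V → ℝ := fun u => (degIn G A u : ℝ) / r with hx
  have hr0 : (0:ℝ) < r := by exact_mod_cast hr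
  have hsumx : ∑ u, x u = A.card := by
    rw [hx]
    rw [← Finset.sum_div, sum_degIn G r hreg A]
    field_simp
  -- the centered indicator vector
  set f : EuclideanSpace ℝ V := WithLp.toLp 2 (fun y => (if y ∈ A then (1:ℝ) else 0) - α) with hf
  have hfsum : (∑ y, f y) = 0 := by
    rw [hf]
    show ∑ y, ((if y ∈ A then (1:ℝ) else 0) - α) = 0
    rw [Finset.sum_sub_distrib, Finset.sum_ite_mem, Finset.univ_inter, Finset.sum_const,
      Finset.sum_const, Finset.card_univ, nsmul_eq_mul, nsmul_eq_mul, mul_one, hα]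
    field_simp
    rw [← hn']; ring
  have hmv : ∀ u, (transMatrix G r).mulVec f u = x u - α := by
    intro u
    have : (transMatrix G r).mulVec f u
        = (transMatrix G r).mulVec (fun y => if y ∈ A then (1:ℝ) else 0) u
          - α * ∑ y, transMatrix G r u y := by
      unfold Matrix.mulVec dotProduct
      rw [Finset.mul_sum, ← Finset.sum_sub_distrib]
      refine Finset.sum_congr rfl fun y _ => ?_
      show transMatrix G r u y * ((if y ∈ A then (1:ℝ) else 0) - α) = _
      ring
    rw [this, mulVec_indicator G r A u, rowsum_eq G r hr hreg u, hx]
    ring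
  have hfsq : ∑ y, (f y)^2 = n * α * (1 - α) := by
    rw [hf]
    show ∑ y, ((if y ∈ A then (1:ℝ) else 0) - α)^2 = n * α * (1 - α)
    have : ∀ y, ((if y ∈ A then (1:ℝ) else 0) - α)^2
        = (if y ∈ A then (1:ℝ) else 0) * (1 - 2*α) + α^2 := by
      intro y
      by_cases h : y ∈ A <;> simp [h] <;> ring
    rw [Finset.sum_congr rfl fun y _ => this y, Finset.sum_add_distrib, ← Finset.sum_mul,
      Finset.sum_ite_mem, Finset.univ_inter, Finset.sum_const, Finset.sum_const,
      Finset.card_univ, nsmul_eq_mul, nsmul_eq_mul, mul_one]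
    have hcard : (A.card : ℝ) = n * α := by rw [hα]; field_simp
    rw [hcard, ← hn']
    ring
  have hspec := mulVec_sq_le G (r := r) hr hreg f hfsum
  rw [hfsq] at hspec
  have hspec2 : ∑ u, (x u - α)^2 ≤ lam^2 * (n * α * (1 - α)) := by
    rw [← Finset.sum_congr rfl fun u (_ : u ∈ Finset.univ) => congrArg (· ^ 2) (hmv u)]
    exact hspec
  -- pInf identity
  have hpinf : ∀ u, pInf G r 2 A u = 2 * x u - (x u)^2 := by
    intro u
    unfold pInf
    rw [hx]
    ring
  have hsum : ∑ u, pInf G r 2 A u = 2 * (n * α) - ∑ u, (x u)^2 := by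
    rw [Finset.sum_congr rfl fun u _ => hpinf u, Finset.sum_sub_distrib, ← Finset.mul_sum,
      hsumx]
    have hcard : (A.card : ℝ) = n * α := by rw [hα]; field_simp
    rw [hcard]
  have hxsq : ∑ u, (x u)^2 = ∑ u, (x u - α)^2 + 2*α*(n*α) - n*α^2 := by
    have : ∀ u, (x u)^2 = (x u - α)^2 + 2*α*(x u) - α^2 := fun u => by ring
    rw [Finset.sum_congr rfl fun u _ => this u]
    rw [Finset.sum_sub_distrib, Finset.sum_add_distrib, ← Finset.mul_sum, hsumx,
      Finset.sum_const, Finset.card_univ, nsmul_eq_mul]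
    have hcard : (A.card : ℝ) = n * α := by rw [hα]; field_simp
    rw [hcard, ← hn']
    try ring
  rw [hsum, hxsq]
  have hfin : ∑ u, (x u - α)^2 ≤ lam^2 * (n * α * (1 - α)) := hspec2
  have h2 : (1 - lam^2) * (α - 1/10) ≤ 1 := by nlinarith [sq_nonneg lam]
  nlinarith [mul_nonneg (mul_nonneg (sub_nonneg.2 hα9) (sub_nonneg.2 h2)) hn0.le,
    hn0.le, sq_nonneg lam, hfin]

lemma step_bad_le (r : ℕ) (hr : 0 < r) (hreg : G.IsRegularOfDegree r)
    (hlam0 : 0 ≤ secondEigen G r) (hlam1 : secondEigen G r ≤ 1)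
    (hn : 0 < Fintype.card V) (v : V) (A : Finset V)
    (hA : (9/10 : ℝ) * (Fintype.card V : ℝ) ≤ (A.card : ℝ)) :
    ∑ B ∈ Finset.univ.filter
        (fun B : Finset V => (B.card : ℝ) < (9/10) * (Fintype.card V : ℝ)),
      bipsStep G r 2 v A B
    ≤ Real.exp (-((9/100 : ℝ) * (Fintype.card V : ℝ) * (1 - (secondEigen G r)^2))^2
        / (4 * (Fintype.card V : ℝ))) := by
  classical
  set n : ℝ := (Fintype.card V : ℝ) with hn'
  have hn0 : (0:ℝ) < n := by rw [hn']; exact_mod_cast hn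
  set lam := secondEigen G r with hlam
  set s : ℝ := (9/100 : ℝ) * n * (1 - lam^2) with hs
  have hlamsq : lam^2 ≤ 1 := by nlinarith
  have hs0 : 0 ≤ s := by
    rw [hs]
    nlinarith [hn0]
  have hs2n : s / (2 * n) ≤ 1 := by
    rw [div_le_one (by positivity), hs]
    nlinarith [hn0, sq_nonneg lam]
  rw [Finset.sum_filter]
  set φ : ℕ → ℝ := fun m => if (m : ℝ) < 9/10 * n then (1:ℝ) else 0 with hφdef
  have hφval : ∀ m : ℕ, ((m : ℝ) < 9/10 * n → φ m = 1) ∧ (¬ ((m : ℝ) < 9/10 * n) → φ m = 0) := by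
    intro m
    constructor <;> intro h <;> simp [hφdef, h]
  have hform : ∀ B : Finset V,
      (if (B.card : ℝ) < 9/10 * n then bipsStep G r 2 v A B else 0)
      = bipsStep G r 2 v A B * φ B.card := by
    intro B
    by_cases h : (B.card : ℝ) < 9/10 * n
    · rw [if_pos h, (hφval _).1 h, mul_one]
    · rw [if_neg h, (hφval _).2 h, mul_zero]
  rw [Finset.sum_congr rfl fun B _ => hform B]
  rw [show (∑ B ∈ Finset.univ, bipsStep G r 2 v A B * φ B.card)
      = ∑ S ∈ (Finset.univ.erase v).powerset,
        ((∏ u ∈ S, pInf G r 2 A u) * ∏ u ∈ (Finset.univ.erase v) \ S, (1 - pInf G r 2 A u))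
          * φ (S.card + 1) from sum_step_mul G r 2 v A φ]
  have hφ : ∀ S : Finset V,
      ((∏ u ∈ S, pInf G r 2 A u) * ∏ u ∈ (Finset.univ.erase v) \ S, (1 - pInf G r 2 A u))
        * φ (S.card + 1)
      = ((∏ u ∈ S, pInf G r 2 A u) * ∏ u ∈ (Finset.univ.erase v) \ S, (1 - pInf G r 2 A u))
        * (if (S.card : ℝ) < 9/10 * n - 1 then (1:ℝ) else 0) := by
    intro S
    by_cases h : (S.card : ℝ) < 9/10 * n - 1
    · rw [if_pos h, (hφval _).1 (by push_cast; linarith)]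
    · rw [if_neg h, (hφval _).2 (by push_cast; linarith)]
  rw [Finset.sum_congr rfl fun S _ => hφ S]
  refine chernoff (fun u => pInf G r 2 A u) (fun u => pInf_mem G r hreg A u)
    (Finset.univ.erase v) (9/10 * n - 1) s hn0 hs0 hs2n ?_
  have hmean := mean_bound G r hr hreg hlam0 hlam1 hn A hA
  have hv : pInf G r 2 A v ≤ 1 := (pInf_mem G r hreg A v).2
  rw [Finset.sum_erase_eq_sub (Finset.mem_univ v)]
  rw [← hn', ← hlam] at hmean
  rw [hs]
  linarith

end BipsAux

universe u

/-- inequality (17) in the proof of Lemma 9.  There is an absolute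
constant `C₀ > 0` such that for every connected `r`-regular graph `G` on `n` vertices
with `1 - λ ≥ C₀·√(log n / n)`, the BIPS process with source `v`, `k = 2`, started from
any `A₀ ∋ v` with `|A₀| ≥ (9/10)·n`, satisfies `Pr(|A_t| < (9/10)·n) ≤ t·n^{-8}` for
every `t ≥ 0`. -/
theorem bips_large_stays_large :
    ∃ C₀ : ℝ, 0 < C₀ ∧
      ∀ (V : Type u) [Fintype V] [DecidableEq V] (G : SimpleGraph V)
        [DecidableRel G.Adj] (r : ℕ),
        G.Connected → G.IsRegularOfDegree r →
        1 - secondEigen G r ≥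
          C₀ * Real.sqrt (Real.log (Fintype.card V) / (Fintype.card V)) →
        ∀ (v : V) (A₀ : Finset V), v ∈ A₀ →
          (9/10 : ℝ) * (Fintype.card V : ℝ) ≤ (A₀.card : ℝ) →
          ∀ t : ℕ,
            (∑ B ∈ Finset.univ.filter
                (fun B : Finset V => (B.card : ℝ) < (9/10) * (Fintype.card V : ℝ)),
              chainProb (bipsStep G r 2 v) A₀ t B) ≤
              (t : ℝ) / (Fintype.card V : ℝ) ^ 8 := by
  classical
  refine ⟨1000, by norm_num, ?_⟩
  intro V _ _ G _ r hconn hreg hgap v A₀ hvA₀ hA₀ t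
  have hVne : Nonempty V := hconn.nonempty
  have hn1 : 1 ≤ Fintype.card V := Fintype.card_pos
  set N : ℝ := (Fintype.card V : ℝ) with hN
  have hN0 : (0:ℝ) < N := by rw [hN]; exact_mod_cast hn1
  have hN1 : (1:ℝ) ≤ N := by rw [hN]; exact_mod_cast hn1
  have hA₀' : ¬ ((A₀.card : ℝ) < 9/10 * N) := not_lt.2 hA₀
  by_cases hcard : Fintype.card V = 1
  · -- single vertex
    have hstep : ∀ A : Finset V, ¬ ((A.card : ℝ) < 9/10 * N) →
        ∑ B ∈ Finset.univ.filter (fun B : Finset V => (B.card : ℝ) < 9/10 * N),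
          bipsStep G r 2 v A B ≤ 0 := by
      intro A _
      refine le_of_eq (Finset.sum_eq_zero fun B hB => ?_)
      have hBcard : (B.card : ℝ) < 9/10 * N := (Finset.mem_filter.1 hB).2
      have hB0 : B.card = 0 := by
        by_contra h
        have : 1 ≤ B.card := Nat.one_le_iff_ne_zero.2 h
        have : (1:ℝ) ≤ (B.card : ℝ) := by exact_mod_cast this
        rw [hN, hcard] at hBcard
        norm_num at hBcard
        linarith
      have hBemp : B = ∅ := Finset.card_eq_zero.1 hB0
      subst hBemp
      unfold bipsStep
      rw [if_neg (Finset.notMem_empty v)]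
    have hbound := BipsAux.bad_sum_le G r hreg v A₀ (9/10 * N) 0 le_rfl hA₀' hstep t
    have hrhs : (0:ℝ) ≤ (t : ℝ) / N ^ 8 := by positivity
    calc _ ≤ (t : ℝ) * 0 := hbound
      _ = 0 := by ring
      _ ≤ (t : ℝ) / N ^ 8 := hrhs
  · -- at least two vertices
    have hn2 : 2 ≤ Fintype.card V := by omega
    have hr : 0 < r := by
      by_contra hr0
      push_neg at hr0
      interval_cases r
      obtain ⟨u, hu⟩ := Fintype.exists_ne_of_one_lt_card (by omega) v
      obtain ⟨w⟩ := hconn.preconnected v u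
      cases w with
      | nil => exact hu rfl
      | cons h p =>
        have hmem := (SimpleGraph.mem_neighborFinset G v _).2 h
        have hpos : 0 < G.degree v := Finset.card_pos.2 ⟨_, hmem⟩
        rw [hreg v] at hpos
        exact lt_irrefl 0 hpos
    set lam := secondEigen G r with hlam
    have hlam1 : lam ≤ 1 := BipsAux.secondEigen_le_one G r hreg
    have hlam0 : 0 ≤ lam := BipsAux.secondEigen_nonneg G r hr hreg hn2
    set L : ℝ := Real.log N with hL
    have hL0 : 0 ≤ L := Real.log_nonneg hN1
    have hgap' : 1000 * Real.sqrt (L / N) ≤ 1 - lam := hgap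
    have hdiv0 : 0 ≤ L / N := div_nonneg hL0 hN0.le
    have hsq : 1000000 * (L / N) ≤ (1 - lam)^2 := by
      have h1 := pow_le_pow_left₀ (by positivity) hgap' 2
      rw [mul_pow, Real.sq_sqrt hdiv0] at h1
      calc 1000000 * (L / N) = 1000^2 * (L/N) := by norm_num
        _ ≤ (1 - lam)^2 := h1
    have hsq' : 1000000 * L ≤ N * (1 - lam)^2 := by
      have h2 := mul_le_mul_of_nonneg_left hsq hN0.le
      calc 1000000 * L = N * (1000000 * (L / N)) := by field_simp
        _ ≤ N * (1 - lam)^2 := h2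
    set s : ℝ := 9/100 * N * (1 - lam^2) with hs
    have hs_ge : 9/100 * N * (1 - lam) ≤ s := by
      rw [hs]
      nlinarith [mul_nonneg (mul_nonneg (show (0:ℝ) ≤ 9/100 by norm_num) hN0.le)
        (mul_nonneg hlam0 (sub_nonneg.2 hlam1))]
    have hsge0 : 0 ≤ 9/100 * N * (1 - lam) := by
      have : 0 ≤ 1 - lam := sub_nonneg.2 hlam1
      positivity
    have hs2 : 8100 * (N * L) ≤ s^2 := by
      have h3 := pow_le_pow_left₀ hsge0 hs_ge 2
      have h4 : (9/100 * N * (1 - lam))^2 = 81/10000 * N * (N * (1-lam)^2) := by ring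
      nlinarith [mul_le_mul_of_nonneg_left hsq' (show (0:ℝ) ≤ 81/10000 * N by positivity)]
    have hexp_le : -(s^2) / (4 * N) ≤ -(8 * L) := by
      rw [neg_div, neg_le_neg_iff]
      rw [le_div_iff₀ (by positivity)]
      nlinarith [mul_nonneg hN0.le hL0]
    have hNpow : Real.exp (-(8 * L)) = 1 / N^8 := by
      rw [Real.exp_neg, show (8:ℝ) * L = ((8:ℕ):ℝ) * L by norm_num, Real.exp_nat_mul,
        Real.exp_log hN0, one_div]
    have hfinal : Real.exp (-(s^2) / (4 * N)) ≤ 1 / N^8 := by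
      rw [← hNpow]
      exact Real.exp_le_exp.2 hexp_le
    have hstep : ∀ A : Finset V, ¬ ((A.card : ℝ) < 9/10 * N) →
        ∑ B ∈ Finset.univ.filter (fun B : Finset V => (B.card : ℝ) < 9/10 * N),
          bipsStep G r 2 v A B ≤ 1 / N^8 := by
      intro A hA
      refine le_trans ?_ hfinal
      have := BipsAux.step_bad_le G (r := r) hr hreg hlam0 hlam1 (by omega) v A (not_lt.1 hA)
      rw [← hN, ← hlam] at this
      rw [← hs] at this
      exact this
    have hbound := BipsAux.bad_sum_le G r hreg v A₀ (9/10 * N) (1/N^8) (by positivity)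
      hA₀' hstep t
    calc _ ≤ (t:ℝ) * (1/N^8) := hbound
      _ = (t:ℝ) / N^8 := by ring
end

section
/- Let G be a connected r-regular graph on n vertices with λ < 1, let q = 9/10, and consider the BIPS process on G with source v and parameter k = 2. Writing B_t = n − |A_t| for the number of uninfected vertices at time t, for every t ≥ 0: E(B_{t+1}) ≤ (1 − (1 − λ²)·q)·E(B_t) + n·Pr(|A_t| < q·n). -/
open Finset

section AuxBIPS
set_option linter.unusedSectionVars false
open Finset
variable {V : Type*} [DecidableEq V]

lemma expand1 (p : V → ℝ) (s : Finset V) :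
    ∑ T ∈ s.powerset, (∏ u ∈ s, (if u ∈ T then p u else 1 - p u)) = 1 := by
  induction s using Finset.induction_on with
  | empty => simp
  | @insert a s ha ih =>
    rw [Finset.sum_powerset_insert ha]
    have h1 : ∀ T ∈ s.powerset, (∏ u ∈ insert a s, (if u ∈ T then p u else 1 - p u))
        = (1 - p a) * ∏ u ∈ s, (if u ∈ T then p u else 1 - p u) := by
      intro T hT
      rw [Finset.prod_insert ha, if_neg (fun h => ha (Finset.mem_powerset.1 hT h))]
    have h2 : ∀ T ∈ s.powerset, (∏ u ∈ insert a s, (if u ∈ insert a T then p u else 1 - p u))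
        = p a * ∏ u ∈ s, (if u ∈ T then p u else 1 - p u) := by
      intro T hT
      rw [Finset.prod_insert ha, if_pos (Finset.mem_insert_self a T)]
      congr 1
      refine Finset.prod_congr rfl fun u hu => ?_
      have : u ≠ a := fun h => ha (h ▸ hu)
      simp [Finset.mem_insert, this]
    rw [Finset.sum_congr rfl h1, Finset.sum_congr rfl h2, ← Finset.mul_sum, ← Finset.mul_sum, ih]
    ring

lemma expand2 (p : V → ℝ) (s : Finset V) :
    ∑ T ∈ s.powerset, (∏ u ∈ s, (if u ∈ T then p u else 1 - p u)) * ((s.card : ℝ) - T.card)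
      = ∑ u ∈ s, (1 - p u) := by
  induction s using Finset.induction_on with
  | empty => simp
  | @insert a s ha ih =>
    rw [Finset.sum_powerset_insert ha]
    have h1 : ∀ T ∈ s.powerset,
        (∏ u ∈ insert a s, (if u ∈ T then p u else 1 - p u)) * (((insert a s).card : ℝ) - T.card)
        = (1 - p a) * ((∏ u ∈ s, (if u ∈ T then p u else 1 - p u)) * ((s.card : ℝ) - T.card))
          + (1 - p a) * (∏ u ∈ s, (if u ∈ T then p u else 1 - p u)) := by
      intro T hT
      rw [Finset.prod_insert ha, if_neg (fun h => ha (Finset.mem_powerset.1 hT h)),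
        Finset.card_insert_of_notMem ha]
      push_cast
      ring
    have h2 : ∀ T ∈ s.powerset,
        (∏ u ∈ insert a s, (if u ∈ insert a T then p u else 1 - p u)) *
          (((insert a s).card : ℝ) - (insert a T).card)
        = p a * ((∏ u ∈ s, (if u ∈ T then p u else 1 - p u)) * ((s.card : ℝ) - T.card)) := by
      intro T hT
      have haT : a ∉ T := fun h => ha (Finset.mem_powerset.1 hT h)
      rw [Finset.prod_insert ha, if_pos (Finset.mem_insert_self a T),
        Finset.card_insert_of_notMem ha, Finset.card_insert_of_notMem haT]
      have : (∏ u ∈ s, (if u ∈ insert a T then p u else 1 - p u))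
          = ∏ u ∈ s, (if u ∈ T then p u else 1 - p u) := by
        refine Finset.prod_congr rfl fun u hu => ?_
        have : u ≠ a := fun h => ha (h ▸ hu)
        simp [Finset.mem_insert, this]
      rw [this]
      push_cast
      ring
    rw [Finset.sum_congr rfl h1, Finset.sum_congr rfl h2, Finset.sum_add_distrib,
      ← Finset.mul_sum, ← Finset.mul_sum, ← Finset.mul_sum, ih, expand1,
      Finset.sum_insert ha]
    ring

end AuxBIPS
section
open Finset
variable {V : Type*} [Fintype V] [DecidableEq V]

lemma step_expectation (G : SimpleGraph V) [DecidableRel G.Adj] (r : ℕ) (v : V) (A : Finset V) :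
    ∑ B : Finset V, bipsStep G r 2 v A B * ((Fintype.card V : ℝ) - B.card)
      = ∑ u ∈ Finset.univ.erase v, (1 - pInf G r 2 A u) := by
  classical
  set s := Finset.univ.erase v with hs
  have hvs : v ∉ s := Finset.notMem_erase v _
  have huniv : (Finset.univ : Finset V) = insert v s := by
    rw [hs, Finset.insert_erase (Finset.mem_univ v)]
  have hscard : s.card = Fintype.card V - 1 := by
    rw [hs, Finset.card_erase_of_mem (Finset.mem_univ v), Finset.card_univ]
  have hn1 : 1 ≤ Fintype.card V := Fintype.card_pos_iff.2 ⟨v⟩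
  rw [show (Finset.univ : Finset (Finset V)) = (Finset.univ : Finset V).powerset from
    (Finset.powerset_univ).symm, huniv, Finset.sum_powerset_insert hvs]
  have h1 : ∀ T ∈ s.powerset, bipsStep G r 2 v A T * ((Fintype.card V : ℝ) - T.card) = 0 := by
    intro T hT
    have : v ∉ T := fun h => hvs (Finset.mem_powerset.1 hT h)
    rw [bipsStep, if_neg this, zero_mul]
  rw [Finset.sum_congr rfl h1, Finset.sum_const_zero, zero_add]
  have h2 : ∀ T ∈ s.powerset,
      bipsStep G r 2 v A (insert v T) * ((Fintype.card V : ℝ) - (insert v T).card)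
      = (∏ u ∈ s, (if u ∈ T then pInf G r 2 A u else 1 - pInf G r 2 A u))
          * ((s.card : ℝ) - T.card) := by
    intro T hT
    have hvT : v ∉ T := fun h => hvs (Finset.mem_powerset.1 hT h)
    rw [bipsStep, if_pos (Finset.mem_insert_self v T), Finset.card_insert_of_notMem hvT]
    have hprod : (∏ u ∈ Finset.univ.erase v,
        (if u ∈ insert v T then pInf G r 2 A u else 1 - pInf G r 2 A u))
        = ∏ u ∈ s, (if u ∈ T then pInf G r 2 A u else 1 - pInf G r 2 A u) := by
      refine Finset.prod_congr hs.symm fun u hu => ?_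
      have : u ≠ v := Finset.ne_of_mem_erase (hs ▸ hu)
      simp [Finset.mem_insert, this]
    rw [hprod]
    congr 1
    rw [hscard]
    push_cast [Nat.cast_sub hn1]
    ring
  rw [Finset.sum_congr rfl h2]
  exact expand2 _ s
end
set_option linter.unusedSectionVars false
section
open Finset
variable {V : Type*} [Fintype V] [DecidableEq V]
variable (G : SimpleGraph V) [DecidableRel G.Adj] (r : ℕ)

lemma transMatrix_nonneg (x y : V) : 0 ≤ transMatrix G r x y := by
  unfold transMatrix
  simp only [Matrix.of_apply]
  split_ifs <;> positivity

lemma transMatrix_symm (x y : V) : transMatrix G r x y = transMatrix G r y x := by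
  unfold transMatrix
  simp only [Matrix.of_apply, G.adj_comm x y]

lemma sum_ite_adj (c : ℝ) (x : V) :
    ∑ y, (if G.Adj x y then c else 0) = (G.degree x : ℝ) * c := by
  rw [Finset.sum_ite, Finset.sum_const_zero, add_zero, Finset.sum_const,
    ← SimpleGraph.neighborFinset_eq_filter, SimpleGraph.card_neighborFinset_eq_degree,
    nsmul_eq_mul]

lemma transMatrix_row_sum (hreg : G.IsRegularOfDegree r) (hr : 0 < r) (x : V) :
    ∑ y, transMatrix G r x y = 1 := by
  unfold transMatrix
  simp only [Matrix.of_apply]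
  rw [sum_ite_adj, hreg x]
  field_simp

lemma transMatrix_col_sum (hreg : G.IsRegularOfDegree r) (hr : 0 < r) (y : V) :
    ∑ x, transMatrix G r x y = 1 := by
  rw [Finset.sum_congr rfl fun x _ => transMatrix_symm G r x y]
  exact transMatrix_row_sum G r hreg hr y

/-- The eigen-set defining `secondEigen`. -/
def eigenSet : Set ℝ :=
  {y : ℝ | ∃ (μ : ℝ) (f : V → ℝ), y = |μ| ∧ f ≠ 0 ∧ (∑ x, f x) = 0 ∧
    (transMatrix G r).mulVec f = μ • f}

lemma secondEigen_eq_sSup : secondEigen G r = sSup (eigenSet G r) := rfl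


lemma eigenSet_bddAbove (hreg : G.IsRegularOfDegree r) :
    ∀ y ∈ eigenSet G r, y ≤ 1 := by
  rintro y ⟨μ, f, rfl, hf0, hsum, hmul⟩
  obtain ⟨x₁, hx₁⟩ : ∃ x, f x ≠ 0 := by
    by_contra h
    push_neg at h
    exact hf0 (funext h)
  rcases Nat.eq_zero_or_pos r with hr | hr
  · -- r = 0 : matrix is 0
    have hP : transMatrix G r = 0 := by
      ext x y
      unfold transMatrix
      simp [hr]
    have : μ * f x₁ = 0 := by
      have := congrFun hmul x₁
      rw [hP] at this
      simpa [Matrix.mulVec, dotProduct] using this.symm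
    rcases mul_eq_zero.1 this with h | h
    · simp [h]
    · exact absurd h hx₁
  · obtain ⟨x₀, _, hx₀⟩ := Finset.exists_max_image Finset.univ (fun x => |f x|) ⟨x₁, Finset.mem_univ x₁⟩
    have hfx₀ : 0 < |f x₀| := lt_of_lt_of_le (abs_pos.2 hx₁) (hx₀ x₁ (Finset.mem_univ x₁))
    have key : |μ| * |f x₀| ≤ |f x₀| := by
      have h1 : |μ * f x₀| = |(transMatrix G r).mulVec f x₀| := by
        rw [congrFun hmul x₀]; simp [abs_mul]
      rw [← abs_mul, h1]
      calc |(transMatrix G r).mulVec f x₀|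
          ≤ ∑ y, transMatrix G r x₀ y * |f y| := by
            rw [Matrix.mulVec, dotProduct]
            refine (Finset.abs_sum_le_sum_abs _ _).trans (Finset.sum_le_sum fun y _ => ?_)
            rw [abs_mul, abs_of_nonneg (transMatrix_nonneg G r x₀ y)]
        _ ≤ ∑ y, transMatrix G r x₀ y * |f x₀| := by
            refine Finset.sum_le_sum fun y _ => ?_
            exact mul_le_mul_of_nonneg_left (hx₀ y (Finset.mem_univ y)) (transMatrix_nonneg G r x₀ y)
        _ = |f x₀| := by
            rw [← Finset.sum_mul, transMatrix_row_sum G r hreg hr, one_mul]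
    exact le_of_mul_le_mul_right (by linarith [key]) hfx₀

lemma secondEigen_nonneg : 0 ≤ secondEigen G r :=
  Real.sSup_nonneg (by rintro y ⟨μ, f, rfl, -⟩; exact abs_nonneg μ)

end
set_option linter.unusedSectionVars false
section
open Finset
variable {V : Type*} [Fintype V] [DecidableEq V]
variable (G : SimpleGraph V) [DecidableRel G.Adj] (r : ℕ)

/-- Summation functional on Euclidean space. -/
noncomputable def sumFun : EuclideanSpace ℝ V →ₗ[ℝ] ℝ where
  toFun x := ∑ i, x i
  map_add' x y := by simp [Finset.sum_add_distrib]
  map_smul' c x := by simp [Finset.mul_sum]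

/-- `transMatrix` as a linear endomorphism of Euclidean space. -/
noncomputable def transLin : EuclideanSpace ℝ V →ₗ[ℝ] EuclideanSpace ℝ V where
  toFun x := (WithLp.equiv 2 (V → ℝ)).symm ((transMatrix G r).mulVec ((WithLp.equiv 2 (V → ℝ)) x))
  map_add' x y := by
    ext i
    simp [Matrix.mulVec_add]
  map_smul' c x := by
    ext i
    simp [Matrix.mulVec_smul]

lemma transLin_apply (x : EuclideanSpace ℝ V) (i : V) :
    transLin G r x i = (transMatrix G r).mulVec (fun j => x j) i := rfl

lemma transLin_isSymmetric : (transLin G r).IsSymmetric := by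
  intro x y
  simp only [PiLp.inner_apply, RCLike.inner_apply, starRingEnd_apply, star_trivial]
  have h1 : ∀ i, transLin G r x i * y i = ∑ j, transMatrix G r i j * x j * y i := by
    intro i
    rw [transLin_apply, Matrix.mulVec, dotProduct, Finset.sum_mul]
  have h2 : ∀ j, x j * transLin G r y j = ∑ i, transMatrix G r i j * x j * y i := by
    intro j
    rw [transLin_apply, Matrix.mulVec, dotProduct, Finset.mul_sum]
    exact Finset.sum_congr rfl fun i _ => by rw [transMatrix_symm G r j i]; ring
  rw [Finset.sum_congr rfl fun i _ => mul_comm (y i) (transLin G r x i),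
    Finset.sum_congr rfl fun i _ => mul_comm (transLin G r y i) (x i)]
  rw [Finset.sum_congr rfl fun i _ => h1 i, Finset.sum_congr rfl fun j _ => h2 j,
    Finset.sum_comm]

/-- The hyperplane of mean-zero vectors. -/
noncomputable def meanZero : Submodule ℝ (EuclideanSpace ℝ V) := LinearMap.ker (sumFun (V := V))

lemma mem_meanZero_iff (x : EuclideanSpace ℝ V) : x ∈ meanZero (V := V) ↔ ∑ i, x i = 0 :=
  Iff.rfl

lemma transLin_mapsTo (hreg : G.IsRegularOfDegree r) (hr : 0 < r) :
    ∀ x ∈ meanZero (V := V), transLin G r x ∈ meanZero (V := V) := by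
  intro x hx
  rw [mem_meanZero_iff] at hx ⊢
  have : ∑ i, transLin G r x i = ∑ j, (∑ i, transMatrix G r i j) * x j := by
    rw [Finset.sum_congr rfl fun i (_ : i ∈ Finset.univ) =>
      (by rw [transLin_apply, Matrix.mulVec, dotProduct] :
        transLin G r x i = ∑ j, transMatrix G r i j * x j)]
    rw [Finset.sum_comm]
    exact Finset.sum_congr rfl fun j _ => by rw [Finset.sum_mul]
  rw [this, Finset.sum_congr rfl fun j (_ : j ∈ Finset.univ) => by
    rw [transMatrix_col_sum G r hreg hr j]]
  simpa using hx

end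
set_option linter.unusedSectionVars false
section
open Finset
open scoped RealInnerProductSpace

/-- Rayleigh-quotient bound: if every eigenvalue of a symmetric operator `T` on a
finite-dimensional real inner product space has absolute value at most `c`, then
`‖T x‖ ≤ c ‖x‖`. -/
lemma rayleigh_aux {F : Type*} [NormedAddCommGroup F] [InnerProductSpace ℝ F]
    [FiniteDimensional ℝ F] (T : F →ₗ[ℝ] F) (hT : T.IsSymmetric) (c : ℝ) (hc : 0 ≤ c)
    (heig : ∀ (μ : ℝ) (φ : F), φ ≠ 0 → T φ = μ • φ → |μ| ≤ c) (x : F) :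
    ‖T x‖ ^ 2 ≤ c ^ 2 * ‖x‖ ^ 2 := by
  rcases subsingleton_or_nontrivial F with hsub | hnt
  · have hx0 : x = 0 := Subsingleton.elim x 0
    rw [hx0, map_zero, norm_zero]
    norm_num
  have hSsym : (T ∘ₗ T).IsSymmetric := by
    intro a b
    show ⟪T (T a), b⟫ = ⟪a, T (T b)⟫
    rw [hT (T a) b, hT a (T b)]
  have hray : ∀ z : F, ⟪T (T z), z⟫ = ‖T z‖ ^ 2 := by
    intro z
    show ⟪T (T z), z⟫ = ‖T z‖ ^ 2
    rw [hT (T z) z, real_inner_self_eq_norm_sq]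
  set ν : ℝ := ⨆ z : { z : F // z ≠ 0 },
      ⟪T (T ↑z), ↑z⟫ / ‖(z : F)‖ ^ 2 with hν
  have hEig : Module.End.HasEigenvalue (T ∘ₗ T) ν := by
    have := hSsym.hasEigenvalue_iSup_of_finiteDimensional
    simpa using this
  obtain ⟨C, hC⟩ : ∃ C : ℝ, ∀ z : F, ‖T z‖ ≤ C * ‖z‖ :=
    ⟨‖LinearMap.toContinuousLinearMap T‖, fun z =>
      (LinearMap.toContinuousLinearMap T).le_opNorm z⟩
  have hbdd : BddAbove (Set.range fun z : { z : F // z ≠ 0 } =>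
      ⟪T (T ↑z), ↑z⟫ / ‖(z : F)‖ ^ 2) := by
    refine ⟨C ^ 2, ?_⟩
    rintro y ⟨z, rfl⟩
    dsimp only
    rw [hray]
    have hz : 0 < ‖(z : F)‖ := norm_pos_iff.2 z.2
    rw [div_le_iff₀ (by positivity)]
    have h0 : 0 ≤ ‖T (z : F)‖ := norm_nonneg _
    have := hC (z : F)
    nlinarith
  have hub : ∀ z : F, z ≠ 0 → ‖T z‖ ^ 2 ≤ ν * ‖z‖ ^ 2 := by
    intro z hz
    have h1 : ⟪T (T z), z⟫ / ‖z‖ ^ 2 ≤ ν := le_ciSup hbdd ⟨z, hz⟩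
    rw [hray] at h1
    have hz' : (0:ℝ) < ‖z‖ ^ 2 := by
      have := norm_pos_iff.2 hz
      positivity
    calc ‖T z‖ ^ 2 = (‖T z‖ ^ 2 / ‖z‖ ^ 2) * ‖z‖ ^ 2 := by field_simp
      _ ≤ ν * ‖z‖ ^ 2 := mul_le_mul_of_nonneg_right h1 hz'.le
  have hν0 : 0 ≤ ν := by
    obtain ⟨z, hz⟩ := exists_ne (0 : F)
    have h1 : ⟪T (T z), z⟫ / ‖z‖ ^ 2 ≤ ν := le_ciSup hbdd ⟨z, hz⟩
    rw [hray] at h1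
    have : 0 ≤ ‖T z‖ ^ 2 / ‖z‖ ^ 2 := by positivity
    linarith
  have hνle : ν ≤ c ^ 2 := by
    obtain ⟨w, hw⟩ := hEig.exists_hasEigenvector
    have hw0 : w ≠ 0 := hw.right
    have hww : (T ∘ₗ T) w = ν • w := Module.End.mem_eigenspace_iff.1 hw.left
    set σ := Real.sqrt ν with hσdef
    have hσ2 : σ * σ = ν := Real.mul_self_sqrt hν0
    have hσ0 : 0 ≤ σ := Real.sqrt_nonneg ν
    have hσc : σ ≤ c := by
      by_cases h2 : T w - σ • w = 0
      · have : T w = σ • w := by rwa [sub_eq_zero] at h2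
        have := heig σ w hw0 this
        rwa [abs_of_nonneg hσ0] at this
      · have hTφ : T (T w - σ • w) = (-σ) • (T w - σ • w) := by
          have h3 : T (T w) = ν • w := hww
          rw [map_sub, map_smul, h3, neg_smul, smul_sub, smul_smul, hσ2]
          abel
        have := heig (-σ) (T w - σ • w) h2 hTφ
        rwa [abs_neg, abs_of_nonneg hσ0] at this
    calc ν = σ * σ := hσ2.symm
      _ ≤ c * c := mul_le_mul hσc hσc hσ0 hc
      _ = c ^ 2 := by ring
  by_cases hx : x = 0
  · rw [hx, map_zero, norm_zero]
    norm_num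
  · exact (hub x hx).trans (mul_le_mul_of_nonneg_right hνle (by positivity))
end
set_option linter.unusedSectionVars false
section
open Finset
open scoped RealInnerProductSpace
variable {V : Type*} [Fintype V] [DecidableEq V]
variable (G : SimpleGraph V) [DecidableRel G.Adj] (r : ℕ)

lemma euclidean_norm_sq (y : EuclideanSpace ℝ V) : ‖y‖ ^ 2 = ∑ i, (y i) ^ 2 := by
  rw [EuclideanSpace.norm_eq, Real.sq_sqrt (by positivity)]
  exact Finset.sum_congr rfl fun i _ => by rw [Real.norm_eq_abs, sq_abs]

lemma spectral_bound (hreg : G.IsRegularOfDegree r) (hr : 0 < r)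
    (g : V → ℝ) (hg : ∑ x, g x = 0) :
    ∑ x, ((transMatrix G r).mulVec g x) ^ 2 ≤ (secondEigen G r) ^ 2 * ∑ x, (g x) ^ 2 := by
  classical
  set xg : EuclideanSpace ℝ V := (WithLp.equiv 2 (V → ℝ)).symm g with hxg
  have hxg_apply : ∀ i, xg i = g i := fun i => rfl
  have hmem : xg ∈ meanZero (V := V) := by
    rw [mem_meanZero_iff]
    simpa [hxg_apply] using hg
  set T' := (transLin G r).restrict (transLin_mapsTo G r hreg hr) with hT'
  have hT'coe : ∀ z : ↥(meanZero (V := V)), (T' z : EuclideanSpace ℝ V) = transLin G r z :=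
    fun z => rfl
  have hT'sym : T'.IsSymmetric := by
    intro a b
    have h := transLin_isSymmetric G r (a : EuclideanSpace ℝ V) (b : EuclideanSpace ℝ V)
    rw [Submodule.coe_inner, Submodule.coe_inner, hT'coe, hT'coe]
    exact h
  have heig : ∀ (μ : ℝ) (φ : ↥(meanZero (V := V))), φ ≠ 0 → T' φ = μ • φ → |μ| ≤ secondEigen G r := by
    intro μ φ hφ0 hφ
    have hmem' : |μ| ∈ eigenSet G r := by
      refine ⟨μ, fun i => (φ : EuclideanSpace ℝ V) i, rfl, ?_, ?_, ?_⟩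
      · intro hF
        apply hφ0
        apply Subtype.ext
        ext i
        exact congrFun hF i
      · exact φ.2
      · have hcoe : (T' φ : EuclideanSpace ℝ V) = μ • (φ : EuclideanSpace ℝ V) := by
          rw [hφ]
          rfl
        funext i
        have h1 : transLin G r (φ : EuclideanSpace ℝ V) i
            = (μ • (φ : EuclideanSpace ℝ V) : EuclideanSpace ℝ V) i := by
          rw [← hT'coe φ, hcoe]
        rw [show ((transMatrix G r).mulVec fun i => (φ : EuclideanSpace ℝ V) i) i
            = transLin G r (φ : EuclideanSpace ℝ V) i from rfl, h1]
        rfl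
    exact le_csSup ⟨1, fun y hy => eigenSet_bddAbove G r hreg y hy⟩ hmem'
  have key := rayleigh_aux T' hT'sym (secondEigen G r) (secondEigen_nonneg G r) heig
    ⟨xg, hmem⟩
  have hnorm1 : ‖T' ⟨xg, hmem⟩‖ ^ 2 = ∑ x, ((transMatrix G r).mulVec g x) ^ 2 := by
    rw [show ‖T' ⟨xg, hmem⟩‖ = ‖(T' ⟨xg, hmem⟩ : EuclideanSpace ℝ V)‖ from rfl,
      euclidean_norm_sq]
    exact Finset.sum_congr rfl fun i _ => rfl
  have hnorm2 : ‖(⟨xg, hmem⟩ : ↥(meanZero (V := V)))‖ ^ 2 = ∑ x, (g x) ^ 2 := by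
    rw [show ‖(⟨xg, hmem⟩ : ↥(meanZero (V := V)))‖ = ‖xg‖ from rfl, euclidean_norm_sq]
    exact Finset.sum_congr rfl fun i _ => rfl
  rw [hnorm1, hnorm2] at key
  exact key

end
set_option linter.unusedSectionVars false
section
open Finset
variable {V : Type*} [Fintype V] [DecidableEq V]
variable (G : SimpleGraph V) [DecidableRel G.Adj] (r : ℕ)

lemma degIn_le (hreg : G.IsRegularOfDegree r) (A : Finset V) (u : V) :
    degIn G A u ≤ r := by
  rw [← hreg u, SimpleGraph.degree]
  exact Finset.card_le_card (Finset.inter_subset_left)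

lemma one_sub_div_mem (hreg : G.IsRegularOfDegree r) (A : Finset V) (u : V) :
    0 ≤ 1 - (degIn G A u : ℝ) / r ∧ 1 - (degIn G A u : ℝ) / r ≤ 1 := by
  rcases Nat.eq_zero_or_pos r with h0 | hr
  · have : degIn G A u = 0 := Nat.le_zero.1 (h0 ▸ degIn_le G r hreg A u)
    rw [this]
    norm_num
  · have hd : (degIn G A u : ℝ) ≤ r := Nat.cast_le.2 (degIn_le G r hreg A u)
    have hr' : (0:ℝ) < r := Nat.cast_pos.2 hr
    constructor
    · rw [sub_nonneg, div_le_one hr']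
      exact hd
    · have : 0 ≤ (degIn G A u : ℝ) / r := by positivity
      linarith

lemma pInf_mem (hreg : G.IsRegularOfDegree r) (A : Finset V) (u : V) :
    0 ≤ pInf G r 2 A u ∧ pInf G r 2 A u ≤ 1 := by
  obtain ⟨h0, h1⟩ := one_sub_div_mem G r hreg A u
  unfold pInf
  constructor <;> nlinarith

lemma bipsStep_nonneg (hreg : G.IsRegularOfDegree r) (v : V) (A B : Finset V) :
    0 ≤ bipsStep G r 2 v A B := by
  unfold bipsStep
  split_ifs
  · refine Finset.prod_nonneg fun u _ => ?_
    obtain ⟨h0, h1⟩ := pInf_mem G r hreg A u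
    split_ifs
    · exact h0
    · linarith
  · norm_num

lemma chainProb_nonneg (hreg : G.IsRegularOfDegree r) (v : V) (A₀ : Finset V) (t : ℕ)
    (B : Finset V) : 0 ≤ chainProb (bipsStep G r 2 v) A₀ t B := by
  induction t generalizing B with
  | zero =>
    unfold chainProb
    split_ifs <;> norm_num
  | succ t ih =>
    unfold chainProb
    exact Finset.sum_nonneg fun A _ =>
      mul_nonneg (ih A) (bipsStep_nonneg G r hreg v A B)

lemma mulVec_compl_indicator (hreg : G.IsRegularOfDegree r) (hr : 0 < r) (A : Finset V)
    (u : V) :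
    (transMatrix G r).mulVec (fun y => if y ∈ A then (0:ℝ) else 1) u
      = 1 - (degIn G A u : ℝ) / r := by
  have hr' : (0:ℝ) < r := Nat.cast_pos.2 hr
  have step1 : ∀ y, transMatrix G r u y * (if y ∈ A then (0:ℝ) else 1)
      = if y ∈ G.neighborFinset u \ A then (r:ℝ)⁻¹ else 0 := by
    intro y
    unfold transMatrix
    simp only [Matrix.of_apply, Finset.mem_sdiff, SimpleGraph.mem_neighborFinset]
    by_cases h1 : G.Adj u y <;> by_cases h2 : y ∈ A <;> simp [h1, h2]
  rw [Matrix.mulVec, dotProduct, Finset.sum_congr rfl fun y _ => step1 y,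
    Finset.sum_ite_mem, Finset.univ_inter, Finset.sum_const, nsmul_eq_mul]
  have hcard : ((G.neighborFinset u \ A).card : ℝ) = (r : ℝ) - degIn G A u := by
    have h := Finset.card_sdiff_add_card_inter (G.neighborFinset u) A
    have hdeg : (G.neighborFinset u).card = r := hreg u
    rw [hdeg] at h
    have : (G.neighborFinset u \ A).card = r - degIn G A u := by
      unfold degIn
      omega
    rw [this]
    have hd := degIn_le G r hreg A u
    push_cast [Nat.cast_sub hd]
    ring
  rw [hcard]
  field_simp

lemma SA_bound (hreg : G.IsRegularOfDegree r) (hr : 0 < r)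
    (hlam : secondEigen G r < 1) (v : V) (A : Finset V) :
    ∑ u ∈ Finset.univ.erase v, (1 - pInf G r 2 A u)
      ≤ (1 - (1 - secondEigen G r ^ 2) * (9/10)) * ((Fintype.card V : ℝ) - A.card)
        + (if (A.card : ℝ) < (9/10) * (Fintype.card V : ℝ) then (Fintype.card V : ℝ) else 0) := by
  classical
  set lam := secondEigen G r with hlamdef
  have hlam0 : 0 ≤ lam := secondEigen_nonneg G r
  have hlamsq : lam ^ 2 ≤ 1 := by nlinarith
  set n : ℝ := (Fintype.card V : ℝ) with hn
  have hAcard : (A.card : ℝ) ≤ n := Nat.cast_le.2 (Finset.card_le_univ A)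
  have hb0 : (0:ℝ) ≤ n - A.card := by linarith
  have hcoef : 0 ≤ 1 - (1 - lam ^ 2) * (9/10) := by nlinarith
  have hterm : ∀ u, (1 - pInf G r 2 A u)
      = ((transMatrix G r).mulVec (fun y => if y ∈ A then (0:ℝ) else 1) u) ^ 2 := by
    intro u
    rw [mulVec_compl_indicator G r hreg hr]
    unfold pInf
    ring
  split_ifs with hq
  · -- easy case : |A| < qn, bound each summand by 1
    have hle : ∑ u ∈ Finset.univ.erase v, (1 - pInf G r 2 A u) ≤ n := by
      calc ∑ u ∈ Finset.univ.erase v, (1 - pInf G r 2 A u)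
          ≤ ∑ u ∈ Finset.univ.erase v, 1 := by
            refine Finset.sum_le_sum fun u _ => ?_
            have := (pInf_mem G r hreg A u).1
            linarith
        _ = ((Finset.univ.erase v).card : ℝ) := by rw [Finset.sum_const, nsmul_eq_mul, mul_one]
        _ ≤ n := by
            rw [hn]
            exact_mod_cast Nat.cast_le.2 ((Finset.card_le_univ _))
    nlinarith [mul_nonneg hcoef hb0]
  · -- hard case : |A| ≥ qn, spectral argument
    push_neg at hq
    set f : V → ℝ := fun y => if y ∈ A then (0:ℝ) else 1 with hf
    set b : ℝ := n - A.card with hbdef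
    have hnpos : (0:ℝ) < n := by
      rw [hn]
      exact_mod_cast Fintype.card_pos_iff.2 ⟨v⟩
    have hsumf : ∑ x, f x = b := by
      rw [hf]
      rw [Finset.sum_ite, Finset.sum_const_zero, Finset.sum_const, zero_add, nsmul_eq_mul,
        mul_one]
      have : Finset.univ.filter (fun y => ¬ y ∈ A) = Finset.univ \ A := by
        ext y
        simp
      rw [this, Finset.card_sdiff_of_subset (Finset.subset_univ A), Finset.card_univ, hbdef, hn]
      push_cast [Nat.cast_sub (Finset.card_le_univ A)]
      ring
    set g : V → ℝ := fun x => f x - b / n with hg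
    have hsumg : ∑ x, g x = 0 := by
      rw [hg]
      simp only [Finset.sum_sub_distrib, hsumf, Finset.sum_const, nsmul_eq_mul, Finset.card_univ]
      rw [← hn]
      field_simp
      ring
    have hPg : ∀ u, (transMatrix G r).mulVec g u = (transMatrix G r).mulVec f u - b / n := by
      intro u
      simp only [Matrix.mulVec, dotProduct]
      rw [Finset.sum_congr rfl fun y (_ : y ∈ Finset.univ) => (by rw [hg]; ring :
        transMatrix G r u y * g y
          = transMatrix G r u y * f y - transMatrix G r u y * (b/n))]
      rw [Finset.sum_sub_distrib, ← Finset.sum_mul, transMatrix_row_sum G r hreg hr, one_mul]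
    have hPgsum : ∑ u, (transMatrix G r).mulVec g u = 0 := by
      simp only [Matrix.mulVec, dotProduct]
      rw [Finset.sum_comm]
      rw [Finset.sum_congr rfl fun y (_ : y ∈ Finset.univ) => (by
        rw [← Finset.sum_mul, transMatrix_col_sum G r hreg hr, one_mul] :
          ∑ u, transMatrix G r u y * g y = g y)]
      exact hsumg
    have hsumfsq : ∑ u, ((transMatrix G r).mulVec f u) ^ 2
        = ∑ u, ((transMatrix G r).mulVec g u) ^ 2 + b ^ 2 / n := by
      rw [Finset.sum_congr rfl fun u (_ : u ∈ Finset.univ) => (by rw [hPg u]; ring :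
        ((transMatrix G r).mulVec f u) ^ 2
          = ((transMatrix G r).mulVec g u + b / n) ^ 2)]
      rw [Finset.sum_congr rfl fun u (_ : u ∈ Finset.univ) => (by ring :
        ((transMatrix G r).mulVec g u + b / n) ^ 2
          = ((transMatrix G r).mulVec g u) ^ 2
            + (2 * (b / n)) * (transMatrix G r).mulVec g u + (b / n) ^ 2)]
      rw [Finset.sum_add_distrib, Finset.sum_add_distrib, ← Finset.mul_sum, hPgsum,
        Finset.sum_const, Finset.card_univ, nsmul_eq_mul, ← hn]
      have : n * (b / n) ^ 2 = b ^ 2 / n := by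
        field_simp
      rw [this]
      ring
    have hgsq : ∑ x, g x ^ 2 = b - b ^ 2 / n := by
      have hfsq : ∀ x, f x ^ 2 = f x := by
        intro x
        simp only [hf]
        split_ifs <;> norm_num
      rw [Finset.sum_congr rfl fun x (_ : x ∈ Finset.univ) => (by rw [hg]; ring :
        g x ^ 2 = f x ^ 2 - (2 * (b / n)) * f x + (b / n) ^ 2)]
      rw [Finset.sum_add_distrib, Finset.sum_sub_distrib,
        Finset.sum_congr rfl fun x (_ : x ∈ Finset.univ) => hfsq x, hsumf,
        ← Finset.mul_sum, hsumf, Finset.sum_const, Finset.card_univ, nsmul_eq_mul, ← hn]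
      field_simp
      ring
    have hspec := spectral_bound G r hreg hr g hsumg
    have hchain : ∑ u ∈ Finset.univ.erase v, (1 - pInf G r 2 A u)
        ≤ lam ^ 2 * (b - b ^ 2 / n) + b ^ 2 / n := by
      calc ∑ u ∈ Finset.univ.erase v, (1 - pInf G r 2 A u)
          = ∑ u ∈ Finset.univ.erase v, ((transMatrix G r).mulVec f u) ^ 2 :=
            Finset.sum_congr rfl fun u _ => hterm u
        _ ≤ ∑ u, ((transMatrix G r).mulVec f u) ^ 2 :=
            Finset.sum_le_sum_of_subset_of_nonneg (Finset.subset_univ _)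
              (fun u _ _ => sq_nonneg _)
        _ = ∑ u, ((transMatrix G r).mulVec g u) ^ 2 + b ^ 2 / n := hsumfsq
        _ ≤ lam ^ 2 * (b - b ^ 2 / n) + b ^ 2 / n := by
            rw [← hgsq]
            linarith [hspec]
    have hble : b ≤ n / 10 := by
      rw [hbdef]
      linarith
    have hdiv : b ^ 2 / n ≤ b / 10 := by
      rw [div_le_div_iff₀ hnpos (by norm_num : (0:ℝ) < 10)]
      nlinarith
    have h1lam : 0 ≤ 1 - lam ^ 2 := by linarith
    have := mul_le_mul_of_nonneg_left hdiv h1lam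
    rw [add_zero]
    calc ∑ u ∈ Finset.univ.erase v, (1 - pInf G r 2 A u)
        ≤ lam ^ 2 * (b - b ^ 2 / n) + b ^ 2 / n := hchain
      _ = lam ^ 2 * b + (1 - lam ^ 2) * (b ^ 2 / n) := by ring
      _ ≤ lam ^ 2 * b + (1 - lam ^ 2) * (b / 10) := by linarith
      _ = (1 - (1 - lam ^ 2) * (9/10)) * b := by ring

end
set_option linter.unusedSectionVars false
section
open Finset
variable {V : Type*} [Fintype V] [DecidableEq V]

theorem bips_uninfected_decay' (G : SimpleGraph V) [DecidableRel G.Adj] (r : ℕ)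
    (hconn : G.Connected)
    (hreg : G.IsRegularOfDegree r) (hlam : secondEigen G r < 1)
    (v : V) (A₀ : Finset V) (hv : v ∈ A₀) (t : ℕ) :
    (∑ B : Finset V, chainProb (bipsStep G r 2 v) A₀ (t+1) B *
        ((Fintype.card V : ℝ) - (B.card : ℝ))) ≤
      (1 - (1 - secondEigen G r ^ 2) * (9/10)) *
          (∑ B : Finset V, chainProb (bipsStep G r 2 v) A₀ t B *
            ((Fintype.card V : ℝ) - (B.card : ℝ))) +
        (Fintype.card V : ℝ) *
          (∑ B ∈ Finset.univ.filter
              (fun B : Finset V => (B.card : ℝ) < (9/10) * (Fintype.card V : ℝ)),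
            chainProb (bipsStep G r 2 v) A₀ t B) := by
  classical
  have hlam0 : 0 ≤ secondEigen G r := secondEigen_nonneg G r
  have hcoef : 0 ≤ 1 - (1 - secondEigen G r ^ 2) * (9/10) := by nlinarith
  have hcard_le : ∀ B : Finset V, (B.card : ℝ) ≤ (Fintype.card V : ℝ) := fun B =>
    Nat.cast_le.2 (Finset.card_le_univ B)
  rcases Nat.eq_zero_or_pos r with hr0 | hr
  · -- degenerate case `r = 0` : the graph has one vertex
    subst hr0
    have hone : ∀ x y : V, x = y := by
      intro x y
      by_contra hxy
      obtain ⟨w⟩ := hconn.preconnected x y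
      have hnil : ¬ w.Nil := SimpleGraph.Walk.not_nil_of_ne hxy
      have hadj : G.Adj x (w.getVert 1) := SimpleGraph.Walk.adj_snd hnil
      have : w.getVert 1 ∈ G.neighborFinset x := (SimpleGraph.mem_neighborFinset G x _).2 hadj
      have hdeg := hreg x
      rw [SimpleGraph.degree] at hdeg
      rw [Finset.card_eq_zero.1 hdeg] at this
      exact absurd this (Finset.notMem_empty _)
    have hcard1 : Fintype.card V = 1 := Fintype.card_eq_one_iff.2 ⟨v, fun y => hone y v⟩
    have hLHS : (∑ B : Finset V, chainProb (bipsStep G 0 2 v) A₀ (t+1) B *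
        ((Fintype.card V : ℝ) - (B.card : ℝ))) = 0 := by
      refine Finset.sum_eq_zero fun B _ => ?_
      by_cases hvB : v ∈ B
      · have hBcard : B.card = 1 := le_antisymm (hcard1 ▸ Finset.card_le_univ B)
          (Finset.card_pos.2 ⟨v, hvB⟩)
        rw [hcard1, hBcard]
        norm_num
      · have hz : chainProb (bipsStep G 0 2 v) A₀ (t+1) B = 0 := by
          show (∑ A : Finset V, chainProb (bipsStep G 0 2 v) A₀ t A * bipsStep G 0 2 v A B) = 0
          refine Finset.sum_eq_zero fun A _ => ?_
          rw [bipsStep, if_neg hvB, mul_zero]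
        rw [hz, zero_mul]
    rw [hLHS]
    have h1 : 0 ≤ ∑ B : Finset V, chainProb (bipsStep G 0 2 v) A₀ t B *
        ((Fintype.card V : ℝ) - (B.card : ℝ)) :=
      Finset.sum_nonneg fun B _ => mul_nonneg (chainProb_nonneg G 0 hreg v A₀ t B)
        (by linarith [hcard_le B])
    have h2 : 0 ≤ ∑ B ∈ Finset.univ.filter
        (fun B : Finset V => (B.card : ℝ) < (9/10) * (Fintype.card V : ℝ)),
        chainProb (bipsStep G 0 2 v) A₀ t B :=
      Finset.sum_nonneg fun B _ => chainProb_nonneg G 0 hreg v A₀ t B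
    have hn0 : (0:ℝ) ≤ (Fintype.card V : ℝ) := Nat.cast_nonneg _
    nlinarith [mul_nonneg hcoef h1, mul_nonneg hn0 h2]
  · -- main case
    have hstep1 : (∑ B : Finset V, chainProb (bipsStep G r 2 v) A₀ (t+1) B *
        ((Fintype.card V : ℝ) - (B.card : ℝ)))
        = ∑ A : Finset V, chainProb (bipsStep G r 2 v) A₀ t A *
            (∑ u ∈ Finset.univ.erase v, (1 - pInf G r 2 A u)) := by
      have h0 : ∀ B : Finset V, chainProb (bipsStep G r 2 v) A₀ (t+1) B
          = ∑ A : Finset V, chainProb (bipsStep G r 2 v) A₀ t A * bipsStep G r 2 v A B :=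
        fun B => rfl
      calc (∑ B : Finset V, chainProb (bipsStep G r 2 v) A₀ (t+1) B *
            ((Fintype.card V : ℝ) - (B.card : ℝ)))
          = ∑ B : Finset V, ∑ A : Finset V, chainProb (bipsStep G r 2 v) A₀ t A *
              (bipsStep G r 2 v A B * ((Fintype.card V : ℝ) - (B.card : ℝ))) := by
            refine Finset.sum_congr rfl fun B _ => ?_
            rw [h0 B, Finset.sum_mul]
            exact Finset.sum_congr rfl fun A _ => by ring
        _ = ∑ A : Finset V, ∑ B : Finset V, chainProb (bipsStep G r 2 v) A₀ t A *
              (bipsStep G r 2 v A B * ((Fintype.card V : ℝ) - (B.card : ℝ))) :=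
            Finset.sum_comm
        _ = ∑ A : Finset V, chainProb (bipsStep G r 2 v) A₀ t A *
              (∑ u ∈ Finset.univ.erase v, (1 - pInf G r 2 A u)) := by
            refine Finset.sum_congr rfl fun A _ => ?_
            rw [← Finset.mul_sum, step_expectation G r v A]
    rw [hstep1]
    have hstep2 : ∑ A : Finset V, chainProb (bipsStep G r 2 v) A₀ t A *
          (∑ u ∈ Finset.univ.erase v, (1 - pInf G r 2 A u))
        ≤ ∑ A : Finset V, chainProb (bipsStep G r 2 v) A₀ t A *
          ((1 - (1 - secondEigen G r ^ 2) * (9/10)) * ((Fintype.card V : ℝ) - A.card)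
            + (if (A.card : ℝ) < (9/10) * (Fintype.card V : ℝ)
               then (Fintype.card V : ℝ) else 0)) :=
      Finset.sum_le_sum fun A _ => mul_le_mul_of_nonneg_left
        (SA_bound G r hreg hr hlam v A) (chainProb_nonneg G r hreg v A₀ t A)
    refine hstep2.trans (le_of_eq ?_)
    rw [Finset.sum_congr rfl fun (A : Finset V) (_ : A ∈ Finset.univ) => (by ring :
      chainProb (bipsStep G r 2 v) A₀ t A *
          ((1 - (1 - secondEigen G r ^ 2) * (9/10)) * ((Fintype.card V : ℝ) - A.card)
            + (if (A.card : ℝ) < (9/10) * (Fintype.card V : ℝ)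
               then (Fintype.card V : ℝ) else 0))
        = (1 - (1 - secondEigen G r ^ 2) * (9/10)) *
            (chainProb (bipsStep G r 2 v) A₀ t A * ((Fintype.card V : ℝ) - A.card))
          + chainProb (bipsStep G r 2 v) A₀ t A *
            (if (A.card : ℝ) < (9/10) * (Fintype.card V : ℝ)
             then (Fintype.card V : ℝ) else 0))]
    rw [Finset.sum_add_distrib, ← Finset.mul_sum]
    congr 1
    have : ∀ A : Finset V, chainProb (bipsStep G r 2 v) A₀ t A *
        (if (A.card : ℝ) < (9/10) * (Fintype.card V : ℝ) then (Fintype.card V : ℝ) else 0)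
        = if (A.card : ℝ) < (9/10) * (Fintype.card V : ℝ)
          then (Fintype.card V : ℝ) * chainProb (bipsStep G r 2 v) A₀ t A else 0 := by
      intro A
      split_ifs
      · ring
      · rw [mul_zero]
    rw [Finset.sum_congr rfl fun A _ => this A, ← Finset.sum_filter, ← Finset.mul_sum]
end


/-- inequality (16) in the proof of Lemma 9.  For a connected
`r`-regular graph `G` on `n` vertices with `λ < 1`, `q = 9/10`, and the BIPS process
with source `v` and `k = 2` started from `A₀ ∋ v`, writing `B_t = n - |A_t|` for the
number of uninfected vertices:
`E(B_{t+1}) ≤ (1 - (1-λ²)·q)·E(B_t) + n·Pr(|A_t| < q·n)`. -/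
theorem bips_uninfected_decay {V : Type*} [Fintype V] [DecidableEq V]
    (G : SimpleGraph V) [DecidableRel G.Adj] (r : ℕ) (hconn : G.Connected)
    (hreg : G.IsRegularOfDegree r) (hlam : secondEigen G r < 1)
    (v : V) (A₀ : Finset V) (hv : v ∈ A₀) (t : ℕ) :
    (∑ B : Finset V, chainProb (bipsStep G r 2 v) A₀ (t+1) B *
        ((Fintype.card V : ℝ) - (B.card : ℝ))) ≤
      (1 - (1 - secondEigen G r ^ 2) * (9/10)) *
          (∑ B : Finset V, chainProb (bipsStep G r 2 v) A₀ t B *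
            ((Fintype.card V : ℝ) - (B.card : ℝ))) +
        (Fintype.card V : ℝ) *
          (∑ B ∈ Finset.univ.filter
              (fun B : Finset V => (B.card : ℝ) < (9/10) * (Fintype.card V : ℝ)),
            chainProb (bipsStep G r 2 v) A₀ t B) := by
  exact bips_uninfected_decay' G r hconn hreg hlam v A₀ hv t
end
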